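/- arXiv:math/9704220 — 5 statements merged into one kernel-verified Lean document; each statement's English description precedes it below -/
import Mathlib

section
/- Let α > 1 be irrational with convergent numerators p_n and partial quotients a_n, and S_α the avoided set of {A_α, B_α}. For 1 ≤ k ≤ a_{n+2} − 1, the intermediate-fraction numerator x = p_n + k·p_{n+1} lies in S_α if and only if (i) p_{n+1} is even, or (ii) k = 1 and p_n is odd, or (iii) k = a_{n+2} − 1 and p_{n+2} is odd. -/
/-- `E α n` is the error `n - qα` where `qα` is the integer multiple of `α`
nearest to `n` (for `α > 1`, this multiple is `round (n/α) * α`). -/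
noncomputable def E (α : ℝ) (n : ℕ) : ℝ := (n : ℝ) - round ((n : ℝ) / α) * α

/-- `A_α`: positive integers whose nearest multiple of `α` exceeds them. -/
def Aset (α : ℝ) : Set ℕ := {n | 0 < n ∧ E α n < 0}

/-- `B_α`: positive integers whose nearest multiple of `α` is below them. -/
def Bset (α : ℝ) : Set ℕ := {n | 0 < n ∧ 0 < E α n}

/-- `S_α`: positive integers not expressible as a sum of two distinct elements
of `A_α` nor of two distinct elements of `B_α`. -/
def Sset (α : ℝ) : Set ℕ :=
  {s | 0 < s ∧ (∀ x ∈ Aset α, ∀ y ∈ Aset α, x ≠ y → x + y ≠ s) ∧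
       (∀ x ∈ Bset α, ∀ y ∈ Bset α, x ≠ y → x + y ≠ s)}
/-- Data of the continued fraction expansion `α = [a 0; a 1, a 2, ...]` of an
irrational `α > 1`, with `t n` the successive complete quotients, and
`p n / q n` the convergents. -/
structure CF (α : ℝ) where
  a : ℕ → ℕ
  t : ℕ → ℝ
  p : ℕ → ℕ
  q : ℕ → ℕ
  t0 : t 0 = α
  ha : ∀ n, 1 ≤ a n
  floor_t : ∀ n, (a n : ℝ) = ⌊t n⌋
  t_rec : ∀ n, t n = a n + 1 / t (n + 1)
  p0 : p 0 = a 0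
  p1 : p 1 = a 1 * a 0 + 1
  p_rec : ∀ n, p (n + 2) = a (n + 2) * p (n + 1) + p n
  q0 : q 0 = 1
  q1 : q 1 = a 1
  q_rec : ∀ n, q (n + 2) = a (n + 2) * q (n + 1) + q n

/-- The numerators extended by two initial terms: `P 0 = p_{-2} = 0`,
`P 1 = p_{-1} = 1`, and `P (n+2) = p n`. -/
def CF.P {α : ℝ} (c : CF α) : ℕ → ℕ
  | 0 => 0
  | 1 => 1
  | n + 2 => c.p n

namespace CFaux

variable {α : ℝ}

lemma tfact (hα : 1 < α) (hirr : Irrational α) (c : CF α) :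
    ∀ m, Irrational (c.t m) ∧ 1 < c.t m := by
  intro m
  induction m with
  | zero => rw [c.t0]; exact ⟨hirr, hα⟩
  | succ m ih =>
    obtain ⟨hi, hl⟩ := ih
    have hrec := c.t_rec m
    have hfl := c.floor_t m
    have h1 : 1 / c.t (m + 1) = c.t m - c.a m := by linarith
    have hirr2 : Irrational (c.t m - c.a m) := by
      have := hi.sub_intCast ⌊c.t m⌋
      rwa [← hfl] at this
    have hfr0 : c.t m - c.a m ≠ 0 := by
      intro h
      rw [h] at hirr2
      exact hirr2 ⟨0, by norm_num⟩
    have hfr1 : 0 < c.t m - c.a m := by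
      rcases lt_or_gt_of_ne hfr0 with h | h
      · exfalso
        have : (c.a m : ℝ) ≤ c.t m := by
          rw [hfl]; exact Int.floor_le _
        linarith
      · exact h
    have hfr2 : c.t m - c.a m < 1 := by
      have : c.t m < ⌊c.t m⌋ + 1 := Int.lt_floor_add_one _
      rw [← hfl] at this
      linarith
    have ht0 : c.t (m + 1) ≠ 0 := by
      intro h
      rw [h] at h1
      simp at h1
      exact hfr0 h1.symm
    have ht1 : c.t (m + 1) = (c.t m - c.a m)⁻¹ := by
      rw [← h1]
      field_simp
    constructor
    · rw [ht1]; exact hirr2.inv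
    · rw [ht1]
      rw [lt_inv_comm₀ (by norm_num) hfr1]
      simpa using hfr2

lemma p_pos (c : CF α) : ∀ m, 0 < c.p m := by
  have H : ∀ m, 0 < c.p m ∧ 0 < c.p (m + 1) := by
    intro m
    induction m with
    | zero =>
      constructor
      · rw [c.p0]; exact c.ha 0
      · rw [c.p1]; omega
    | succ m ih =>
      refine ⟨ih.2, ?_⟩
      rw [c.p_rec m]
      have := ih.1
      omega
  exact fun m => (H m).1

lemma q_pos (c : CF α) : ∀ m, 0 < c.q m := by
  have H : ∀ m, 0 < c.q m ∧ 0 < c.q (m + 1) := by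
    intro m
    induction m with
    | zero =>
      constructor
      · rw [c.q0]; omega
      · rw [c.q1]; exact c.ha 1
    | succ m ih =>
      refine ⟨ih.2, ?_⟩
      rw [c.q_rec m]
      have := ih.1
      omega
  exact fun m => (H m).1

lemma p_lt (c : CF α) : ∀ m, c.p m < c.p (m + 1) := by
  intro m
  cases m with
  | zero =>
    rw [c.p0, c.p1]
    have h1 := c.ha 1
    have h0 := c.ha 0
    nlinarith
  | succ m =>
    rw [c.p_rec m]
    have h1 := c.ha (m + 2)
    have h2 := p_pos c m
    have h3 : 1 * c.p (m + 1) ≤ c.a (m + 2) * c.p (m + 1) := Nat.mul_le_mul_right _ h1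
    omega

lemma det (c : CF α) : ∀ m, (c.p (m + 1) : ℤ) * c.q m - c.p m * c.q (m + 1) = (-1) ^ m := by
  intro m
  induction m with
  | zero =>
    rw [c.p0, c.p1, c.q0, c.q1]
    push_cast
    ring
  | succ m ih =>
    rw [c.p_rec m, c.q_rec m]
    push_cast
    linear_combination (-1 : ℤ) * ih

noncomputable def ee (α : ℝ) (c : CF α) (m : ℕ) : ℝ := (c.p m : ℝ) / α - (c.q m : ℝ)

noncomputable def EE (α : ℝ) (c : CF α) : ℕ → ℝ
  | 0 => -1
  | 1 => 1 / α
  | (m + 2) => (c.p m : ℝ) / α - (c.q m : ℝ)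

lemma ee_eq (c : CF α) (m : ℕ) : ee α c m = EE α c (m + 2) := rfl

lemma ee_rec (hα : 1 < α) (c : CF α) (m : ℕ) :
    ee α c (m + 2) = c.a (m + 2) * ee α c (m + 1) + ee α c m := by
  have hα0 : α ≠ 0 := by positivity
  unfold ee
  rw [c.p_rec m, c.q_rec m]
  push_cast
  field_simp
  ring

lemma EE_rec (hα : 1 < α) (c : CF α) (m : ℕ) :
    EE α c (m + 2) = c.a m * EE α c (m + 1) + EE α c m := by
  have hα0 : α ≠ 0 := by positivity
  match m with
  | 0 =>
    show (c.p 0 : ℝ) / α - (c.q 0 : ℝ) = c.a 0 * (1 / α) + (-1)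
    rw [c.p0, c.q0]
    push_cast
    field_simp
    ring
  | 1 =>
    show (c.p 1 : ℝ) / α - (c.q 1 : ℝ) = c.a 1 * ((c.p 0 : ℝ) / α - (c.q 0 : ℝ)) + 1 / α
    rw [c.p0, c.p1, c.q0, c.q1]
    push_cast
    field_simp
    ring
  | (m + 2) =>
    show ee α c (m + 2) = c.a (m + 2) * ee α c (m + 1) + ee α c m
    exact ee_rec hα c m

lemma EE_step (hα : 1 < α) (hirr : Irrational α) (c : CF α) :
    ∀ m, EE α c (m + 1) = - EE α c m / c.t m := by
  have hα0 : α ≠ 0 := by positivity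
  have ht := tfact hα hirr c
  have htne : ∀ m, c.t m ≠ 0 := fun m => by have := (ht m).2; linarith
  intro m
  induction m with
  | zero =>
    show (1 : ℝ) / α = - (-1) / c.t 0
    rw [c.t0]
    ring
  | succ m ih =>
    have hrec := EE_rec hα c m
    have h3 : 1 / c.t (m + 1) = c.t m - c.a m := by
      have := c.t_rec m; linarith
    have hEm : EE α c m = - EE α c (m + 1) * c.t m := by
      rw [ih]; field_simp [htne m]
    rw [hrec, hEm]
    have h4 : - EE α c (m + 1) / c.t (m + 1) = - EE α c (m + 1) * (1 / c.t (m + 1)) := by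
      ring
    rw [h4, h3]
    ring

lemma ee_step (hα : 1 < α) (hirr : Irrational α) (c : CF α) (m : ℕ) :
    ee α c (m + 1) = - ee α c m / c.t (m + 2) := by
  rw [ee_eq, ee_eq]
  exact EE_step hα hirr c (m + 2)

lemma ee_sign (hα : 1 < α) (hirr : Irrational α) (c : CF α) :
    ∀ m, 0 < (-1 : ℝ) ^ (m + 1) * ee α c m := by
  have hα0 : (0:ℝ) < α := by linarith
  intro m
  induction m with
  | zero =>
    have hfl := c.floor_t 0
    rw [c.t0] at hfl
    have h1 : (c.a 0 : ℝ) ≤ α := by rw [hfl]; exact Int.floor_le _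
    have h2 : (c.a 0 : ℝ) ≠ α := fun h => hirr ⟨(c.a 0 : ℚ), by exact_mod_cast h⟩
    have h3 : (c.a 0 : ℝ) < α := lt_of_le_of_ne h1 h2
    unfold ee
    rw [c.p0, c.q0]
    push_cast
    have : (c.a 0 : ℝ) / α < 1 := (div_lt_one hα0).2 h3
    nlinarith
  | succ m ih =>
    rw [ee_step hα hirr c m]
    have ht := (tfact hα hirr c (m + 2)).2
    have h : (-1 : ℝ) ^ (m + 1 + 1) * (- ee α c m / c.t (m + 2))
        = ((-1 : ℝ) ^ (m + 1) * ee α c m) / c.t (m + 2) := by ring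
    rw [h]
    exact div_pos ih (by linarith)

lemma ee_ne (hα : 1 < α) (hirr : Irrational α) (c : CF α) (m : ℕ) : ee α c m ≠ 0 := by
  intro h
  have := ee_sign hα hirr c m
  rw [h] at this
  simp at this

lemma ee_abs_lt (hα : 1 < α) (hirr : Irrational α) (c : CF α) (m : ℕ) :
    |ee α c (m + 1)| < |ee α c m| := by
  rw [ee_step hα hirr c m]
  have ht := (tfact hα hirr c (m + 2)).2
  rw [abs_div, abs_neg, abs_of_pos (by linarith : (0:ℝ) < c.t (m + 2))]
  have h0 : 0 < |ee α c m| := abs_pos.2 (ee_ne hα hirr c m)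
  exact div_lt_self h0 ht

lemma ee_abs_le (hα : 1 < α) (hirr : Irrational α) (c : CF α) (m : ℕ) :
    |ee α c m| ≤ |ee α c 0| := by
  induction m with
  | zero => exact le_refl _
  | succ m ih => exact le_of_lt (lt_of_lt_of_le (ee_abs_lt hα hirr c m) ih)

lemma ee0_small (hα : 1 < α) (hirr : Irrational α) (c : CF α) : |ee α c 0| < 1 / 2 := by
  have hα0 : (0:ℝ) < α := by linarith
  have hfl := c.floor_t 0
  rw [c.t0] at hfl
  have h1 : (c.a 0 : ℝ) ≤ α := by rw [hfl]; exact Int.floor_le _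
  have h4 : α < (c.a 0 : ℝ) + 1 := by
    have := Int.lt_floor_add_one α; rw [← hfl] at this; linarith
  have h5 : (1 : ℝ) ≤ c.a 0 := by exact_mod_cast c.ha 0
  have hlt : α < 2 * c.a 0 := by linarith
  have hee : ee α c 0 = (c.a 0 : ℝ) / α - 1 := by
    unfold ee; rw [c.p0, c.q0]; push_cast; ring
  have hneg : ee α c 0 < 0 := by
    have := ee_sign hα hirr c 0
    norm_num at this
    linarith
  rw [abs_of_neg hneg, hee]
  have : 1 / 2 < (c.a 0 : ℝ) / α := by
    rw [div_lt_div_iff₀ (by norm_num) hα0]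
    linarith
  linarith

lemma fract_ne_half {r : ℝ} (h : Irrational r) : Int.fract r ≠ 1 / 2 := by
  intro hf
  have h1 : r - ⌊r⌋ = 1 / 2 := by rw [Int.self_sub_floor, hf]
  exact h ⟨(⌊r⌋ : ℚ) + 1 / 2, by push_cast; linarith⟩

lemma fract_pos_irr {r : ℝ} (h : Irrational r) : 0 < Int.fract r :=
  Int.fract_pos.2 (h.ne_int ⌊r⌋)

lemma Esign (hα : 1 < α) (hirr : Irrational α) (x : ℕ) (hx : 0 < x) :
    (E α x < 0 ↔ 1 / 2 < Int.fract ((x : ℝ) / α)) ∧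
      (0 < E α x ↔ Int.fract ((x : ℝ) / α) < 1 / 2) := by
  have hα0 : (0:ℝ) < α := by linarith
  set r : ℝ := (x : ℝ) / α with hr_def
  have hr : Irrational r := hirr.natCast_div (by omega)
  have hfr : Int.fract r = r - ⌊r⌋ := (Int.self_sub_floor r).symm
  have hpos : 0 < Int.fract r := fract_pos_irr hr
  have hlt1 : Int.fract r < 1 := Int.fract_lt_one r
  have hneh : Int.fract r ≠ 1 / 2 := fract_ne_half hr
  have hxr : (x : ℝ) = r * α := by rw [hr_def]; field_simp
  have hE : E α x = α * (r - round r) := by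
    unfold E
    rw [← hr_def, hxr]
    ring
  rcases lt_or_gt_of_ne hneh with hc | hc
  · have hround : round r = ⌊r⌋ := by
      rw [round_eq]
      rw [Int.floor_eq_iff]
      constructor
      · linarith [Int.floor_le r]
      · push_cast
        linarith
    have hEpos : 0 < E α x := by
      rw [hE, hround]
      have : 0 < r - ⌊r⌋ := by linarith
      positivity
    exact ⟨iff_of_false (by linarith) (by linarith),
      iff_of_true hEpos hc⟩
  · have hround : round r = ⌊r⌋ + 1 := by
      rw [round_eq]
      rw [Int.floor_eq_iff]
      constructor
      · push_cast
        linarith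
      · push_cast
        linarith
    have hEneg : E α x < 0 := by
      rw [hE, hround]
      push_cast
      have h1 : r - (⌊r⌋ + 1) < 0 := by linarith
      nlinarith
    exact ⟨iff_of_true hEneg hc, iff_of_false (by linarith) (by linarith)⟩

lemma memA_iff (hα : 1 < α) (hirr : Irrational α) (x : ℕ) :
    x ∈ Aset α ↔ 0 < x ∧ 1 / 2 < Int.fract ((x : ℝ) / α) := by
  constructor
  · rintro ⟨hx, hE⟩
    exact ⟨hx, ((Esign hα hirr x hx).1).1 hE⟩
  · rintro ⟨hx, hf⟩
    exact ⟨hx, ((Esign hα hirr x hx).1).2 hf⟩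

lemma memB_iff (hα : 1 < α) (hirr : Irrational α) (x : ℕ) :
    x ∈ Bset α ↔ 0 < x ∧ Int.fract ((x : ℝ) / α) < 1 / 2 := by
  constructor
  · rintro ⟨hx, hE⟩
    exact ⟨hx, ((Esign hα hirr x hx).2).1 hE⟩
  · rintro ⟨hx, hf⟩
    exact ⟨hx, ((Esign hα hirr x hx).2).2 hf⟩

lemma zmod2_cases (z : ZMod 2) : z = 0 ∨ z = 1 := by revert z; decide

lemma even_nat_zmod (m : ℕ) : Even m ↔ (m : ZMod 2) = 0 := by
  rw [ZMod.natCast_eq_zero_iff]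
  exact even_iff_two_dvd

lemma odd_nat_zmod (m : ℕ) : Odd m ↔ (m : ZMod 2) = 1 := by
  rw [Nat.not_even_iff_odd.symm, even_nat_zmod]
  rcases zmod2_cases (m : ZMod 2) with h | h <;> simp [h]

lemma even_int_zmod (m : ℤ) : Even m ↔ (m : ZMod 2) = 0 := by
  rw [ZMod.intCast_zmod_eq_zero_iff_dvd]
  exact even_iff_two_dvd

lemma odd_int_zmod (m : ℤ) : Odd m ↔ (m : ZMod 2) = 1 := by
  rw [Int.not_even_iff_odd.symm, even_int_zmod]
  rcases zmod2_cases (m : ZMod 2) with h | h <;> simp [h]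

end CFaux

open CFaux in
set_option maxHeartbeats 4000000 in
/-- For `1 ≤ k ≤ a_{n+2} - 1`, the intermediate-fraction numerator
`p_n + k * p_{n+1}` is in `S_α` iff (i) `p_{n+1}` is even, or (ii) `k = 1`
and `p_n` is odd, or (iii) `k = a_{n+2} - 1` and `p_{n+2}` is odd. -/
theorem stmt11 (α : ℝ) (hα : 1 < α) (hirr : Irrational α) (c : CF α)
    (n k : ℕ) (hk1 : 1 ≤ k) (hk2 : k ≤ c.a (n + 2) - 1) :
    c.p n + k * c.p (n + 1) ∈ Sset α ↔
      Even (c.p (n + 1)) ∨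
      (k = 1 ∧ Odd (c.p n)) ∨
      (k = c.a (n + 2) - 1 ∧ Odd (c.p (n + 2))) := by
  classical
  have hα0 : (0:ℝ) < α := by linarith
  have hαne : α ≠ 0 := ne_of_gt hα0
  have ha1 := c.ha (n + 2)
  set a := c.a (n + 2) with ha_def
  have ha2 : 2 ≤ a := by omega
  have hk_le : k ≤ a := by omega
  have hak1 : 1 ≤ a - k := by omega
  -- positivity of p, q
  have hpn : 0 < c.p n := p_pos c n
  have hpn1 : 0 < c.p (n + 1) := p_pos c (n + 1)
  have hqn : 0 < c.q n := q_pos c n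
  have hqn1 : 0 < c.q (n + 1) := q_pos c (n + 1)
  have hplt : c.p n < c.p (n + 1) := p_lt c n
  set S : ℕ := c.p n + k * c.p (n + 1) with hS_def
  set Qb : ℕ := c.q n + k * c.q (n + 1) with hQb_def
  have hS_pos : 0 < S := by omega
  clear_value a S Qb
  -- sign bookkeeping
  set σ : ℝ := (-1 : ℝ) ^ (n + 1) with hσ_def
  set f : ℝ := -(σ * ee α c (n + 1)) with hf_def
  set g : ℝ := σ * ee α c (n + 2) with hg_def
  set ε : ℝ := σ * (ee α c n + k * ee α c (n + 1)) with hε_def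
  have hσ2 : σ * σ = 1 := by
    rw [hσ_def, ← pow_add]
    have h2 : (n + 1) + (n + 1) = 2 * (n + 1) := by ring
    rw [h2, pow_mul]
    norm_num
  have hσcases : σ = 1 ∨ σ = -1 := by
    rcases Nat.even_or_odd (n + 1) with h | h
    · exact Or.inl (Even.neg_one_pow h)
    · exact Or.inr (Odd.neg_one_pow h)
  have hσabs : |σ| = 1 := by rcases hσcases with h | h <;> rw [h] <;> norm_num
  have hf_pos : 0 < f := by
    have h1 := ee_sign hα hirr c (n + 1)
    have h2 : f = (-1 : ℝ) ^ (n + 1 + 1) * ee α c (n + 1) := by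
      rw [hf_def, hσ_def]; ring
    rw [h2]; exact h1
  have hg_pos : 0 < g := by
    have h1 := ee_sign hα hirr c (n + 2)
    have h2 : g = (-1 : ℝ) ^ (n + 2 + 1) * ee α c (n + 2) := by
      rw [hg_def, hσ_def]; ring
    rw [h2]; exact h1
  have hf_abs : f = |ee α c (n + 1)| := by
    have h1 : |f| = |ee α c (n + 1)| := by
      rw [hf_def, abs_neg, abs_mul, hσabs, one_mul]
    rw [← h1, abs_of_pos hf_pos]
  have hg_abs : g = |ee α c (n + 2)| := by
    have h1 : |g| = |ee α c (n + 2)| := by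
      rw [hg_def, abs_mul, hσabs, one_mul]
    rw [← h1, abs_of_pos hg_pos]
  have hn_abs : σ * ee α c n = |ee α c n| := by
    have h0 : 0 < σ * ee α c n := by
      have h1 := ee_sign hα hirr c n
      rw [← hσ_def] at h1; exact h1
    have h1 : |σ * ee α c n| = |ee α c n| := by rw [abs_mul, hσabs, one_mul]
    rw [← h1, abs_of_pos h0]
  have hgf : g < f := by
    rw [hg_abs, hf_abs]; exact ee_abs_lt hα hirr c (n + 1)
  have hεf : ε = ((a - k : ℕ) : ℝ) * f + g := by
    have hrec := ee_rec hα c n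
    rw [← ha_def] at hrec
    have hcast : ((a - k : ℕ) : ℝ) = (a : ℝ) - k := by
      push_cast [Nat.cast_sub hk_le]; ring
    rw [hε_def, hf_def, hg_def, hcast]
    linear_combination (-σ) * hrec
  have hε_pos : 0 < ε := by
    have h1 : (1 : ℝ) ≤ ((a - k : ℕ) : ℝ) := by exact_mod_cast hak1
    rw [hεf]; nlinarith
  have hε_half : ε < 1 / 2 := by
    have h1 : ε = σ * ee α c n - k * f := by rw [hε_def, hf_def]; ring
    have h2 : (1 : ℝ) ≤ (k : ℝ) := by exact_mod_cast hk1
    have h3 := ee_abs_le hα hirr c n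
    have h4 := ee0_small hα hirr c
    rw [h1, hn_abs]
    nlinarith
  have hsq : (S : ℝ) / α - (Qb : ℝ) = σ * ε := by
    have h1 : (S : ℝ) / α - (Qb : ℝ) = ee α c n + k * ee α c (n + 1) := by
      rw [hS_def, hQb_def]
      unfold ee
      push_cast
      field_simp
      ring
    rw [h1, hε_def]
    linear_combination (-(ee α c n + k * ee α c (n + 1))) * hσ2
  clear_value σ f g ε
  -- the core lattice lemma
  have core : ∀ x u : ℤ, 0 < x → x < 2 * S → 0 < σ * ((x : ℝ) / α - u) →
      σ * ((x : ℝ) / α - u) < 2 * ε →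
      ∃ cc : ℤ, x = S + cc * c.p (n + 1) ∧ u = Qb + cc * c.q (n + 1) ∧
        cc.natAbs ≤ k ∧ cc.natAbs ≤ a - k ∧
        σ * ((x : ℝ) / α - u) = ε - cc * f := by
    intro x u hx0 hx2 hv0 hv2
    set δ : ℤ := (-1) ^ n with hδ_def
    have hδ2 : δ * δ = 1 := by
      rw [hδ_def, ← pow_add]
      have h2 : n + n = 2 * n := by ring
      rw [h2, pow_mul]
      norm_num
    have hdet := det c n
    rw [← hδ_def] at hdet
    set cc : ℤ := δ * (x * Qb - u * S) with hcc_def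
    set dd : ℤ := δ * (u * c.p (n + 1) - x * c.q (n + 1)) with hdd_def
    have hx : x = cc * c.p (n + 1) + dd * S := by
      rw [hcc_def, hdd_def]
      push_cast [hS_def, hQb_def]
      push_cast [hS_def, hQb_def] at hdet
      linear_combination (-(δ * x)) * hdet + (-x) * hδ2
    have hu : u = cc * c.q (n + 1) + dd * Qb := by
      rw [hcc_def, hdd_def]
      push_cast [hS_def, hQb_def]
      push_cast [hS_def, hQb_def] at hdet
      linear_combination (-(δ * u)) * hdet + (-u) * hδ2
    clear_value δ cc dd
    have hxR : (x : ℝ) = cc * c.p (n + 1) + dd * S := by exact_mod_cast hx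
    have huR : (u : ℝ) = cc * c.q (n + 1) + dd * Qb := by exact_mod_cast hu
    have hval : σ * ((x : ℝ) / α - u) = dd * ε - cc * f := by
      have h1 : (x : ℝ) / α - u
          = cc * ee α c (n + 1) + dd * ((S : ℝ) / α - (Qb : ℝ)) := by
        rw [hxR, huR]
        unfold ee
        field_simp
        ring
      rw [h1, hsq, hf_def]
      linear_combination (dd * ε) * hσ2
    rw [hval] at hv0 hv2
    have hp1Z : (1 : ℤ) ≤ c.p (n + 1) := by exact_mod_cast hpn1
    have hSZ : (0 : ℤ) ≤ (S : ℤ) := Int.natCast_nonneg S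
    have hdd1 : dd = 1 := by
      rcases lt_trichotomy dd 1 with h | h | h
      · exfalso
        have hdd0 : dd ≤ 0 := by omega
        have hccneg : cc ≤ -1 := by
          by_contra hcn
          push_neg at hcn
          have hcc0 : 0 ≤ cc := by omega
          have h1 : (0 : ℝ) ≤ (cc : ℝ) * f :=
            mul_nonneg (by exact_mod_cast hcc0) (le_of_lt hf_pos)
          have h2 : (dd : ℝ) * ε ≤ 0 :=
            mul_nonpos_of_nonpos_of_nonneg (by exact_mod_cast hdd0) (le_of_lt hε_pos)
          linarith
        have e1 : cc * (c.p (n + 1) : ℤ) ≤ (-1) * c.p (n + 1) :=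
          mul_le_mul_of_nonneg_right hccneg (by linarith)
        have e2 : dd * (S : ℤ) ≤ 0 := mul_nonpos_of_nonpos_of_nonneg hdd0 hSZ
        linarith [hx, hx0]
      · exact h
      · exfalso
        have hdd2 : 2 ≤ dd := by omega
        have hccpos : 1 ≤ cc := by
          by_contra hcn
          push_neg at hcn
          have hcc0 : cc ≤ 0 := by omega
          have h1 : (cc : ℝ) * f ≤ 0 :=
            mul_nonpos_of_nonpos_of_nonneg (by exact_mod_cast hcc0) (le_of_lt hf_pos)
          have h2 : 2 * ε ≤ (dd : ℝ) * ε := by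
            have h3 : (2 : ℝ) ≤ (dd : ℝ) := by exact_mod_cast hdd2
            exact mul_le_mul_of_nonneg_right h3 (le_of_lt hε_pos)
          linarith
        have e1 : 1 * (c.p (n + 1) : ℤ) ≤ cc * c.p (n + 1) :=
          mul_le_mul_of_nonneg_right hccpos (by linarith)
        have e2 : 2 * (S : ℤ) ≤ dd * S := mul_le_mul_of_nonneg_right hdd2 hSZ
        linarith [hx, hx2]
    rw [hdd1] at hx hu hv0 hv2
    push_cast at hv0 hv2
    rw [one_mul] at hx hu
    refine ⟨cc, by linear_combination hx, by linear_combination hu, ?_, ?_, by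
      rw [hval, hdd1]; push_cast; ring⟩
    · -- natAbs ≤ k
      by_contra hcn
      push_neg at hcn
      have h1 : -(S : ℤ) < cc * c.p (n + 1) := by linarith [hx, hx0]
      have h2 : cc * c.p (n + 1) < S := by linarith [hx, hx2]
      have h3 : |cc * (c.p (n + 1) : ℤ)| < S := abs_lt.2 ⟨h1, h2⟩
      rw [abs_mul, abs_of_nonneg (by linarith : (0:ℤ) ≤ (c.p (n + 1) : ℤ))] at h3
      have h4 : ((k : ℤ) + 1) ≤ |cc| := by
        rw [Int.abs_eq_natAbs]
        exact_mod_cast hcn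
      have h5 : ((k : ℤ) + 1) * c.p (n + 1) ≤ |cc| * c.p (n + 1) :=
        mul_le_mul_of_nonneg_right h4 (by linarith)
      have h6 : ((S : ℕ) : ℤ) = (c.p n : ℤ) + k * c.p (n + 1) := by
        rw [hS_def]; push_cast; ring
      have h7 : (c.p n : ℤ) < c.p (n + 1) := by exact_mod_cast hplt
      linarith [h3, h5, h6, h7]
    · -- natAbs ≤ a - k
      have habs : |(cc : ℝ)| * f < ε := by
        have h1 : |(cc : ℝ) * f| < ε := abs_lt.2 ⟨by linarith, by linarith⟩
        rwa [abs_mul, abs_of_pos hf_pos] at h1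
      have h2 : |(cc : ℝ)| * f < (((a - k : ℕ) : ℝ) + 1) * f := by
        rw [hεf] at habs
        linarith [habs, hgf]
      have h3 : |(cc : ℝ)| < ((a - k : ℕ) : ℝ) + 1 := by
        exact lt_of_mul_lt_mul_right h2 hf_pos.le
      have h4 : ((cc.natAbs : ℕ) : ℝ) < ((a - k : ℕ) : ℝ) + 1 := by
        rw [Nat.cast_natAbs, Int.cast_abs]
        exact h3
      have h5 : cc.natAbs < (a - k) + 1 := by exact_mod_cast h4
      omega
  -- parity bridge facts in ZMod 2
  have hdet2 : (c.p (n + 1) : ZMod 2) * (c.q n : ZMod 2)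
      - (c.p n : ZMod 2) * (c.q (n + 1) : ZMod 2) = 1 := by
    have h := det c n
    have h2 := congrArg (fun z : ℤ => (z : ZMod 2)) h
    push_cast at h2
    have hneg : (-1 : ZMod 2) = 1 := by decide
    rw [hneg, one_pow] at h2
    exact h2
  have hp1z : Odd (c.p (n + 1)) → ((c.p (n + 1) : ZMod 2) = 1) := fun h =>
    (odd_nat_zmod _).1 h
  -- given a good lattice point, contradict the RHS parity conditions
  have parity_contra : ∀ cc : ℤ, cc ≠ 0 → cc.natAbs ≤ k → cc.natAbs ≤ a - k →
      Even ((S : ℤ) + cc * c.p (n + 1)) →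
      (Even (c.p (n + 1)) ∨ (k = 1 ∧ Odd (c.p n)) ∨ (k = a - 1 ∧ Odd (c.p (n + 2)))) →
      False := by
    intro cc hcc0 hcck hccak hEv hRHS
    have hEv2 : (c.p n : ZMod 2) + (k : ZMod 2) * (c.p (n + 1) : ZMod 2)
        + (cc : ZMod 2) * (c.p (n + 1) : ZMod 2) = 0 := by
      rw [even_int_zmod] at hEv
      rw [hS_def] at hEv
      push_cast at hEv
      linear_combination hEv
    rcases hRHS with h1 | ⟨hk1', h2⟩ | ⟨hk3, h3⟩
    · rw [even_nat_zmod] at h1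
      have key : ∀ P0 P1 Q0 Q1 K C : ZMod 2,
          P1 * Q0 - P0 * Q1 = 1 → P1 = 0 → P0 + K * P1 + C * P1 = 0 → False := by decide
      exact key _ _ _ _ _ _ hdet2 h1 hEv2
    · have hcc1 : cc.natAbs = 1 := by
        have := Int.natAbs_pos.2 hcc0
        omega
      have hccz : (cc : ZMod 2) = 1 := by
        rcases Int.natAbs_eq_iff.1 hcc1 with h | h <;> rw [h] <;> decide
      have hkz : (k : ZMod 2) = 1 := by rw [hk1']; decide
      rw [odd_nat_zmod] at h2
      rw [hccz, hkz] at hEv2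
      have key : ∀ P0 P1 : ZMod 2, P0 = 1 → P0 + 1 * P1 + 1 * P1 = 0 → False := by decide
      exact key _ _ h2 hEv2
    · have hcc1 : cc.natAbs = 1 := by
        have h5 := Int.natAbs_pos.2 hcc0
        omega
      have hccz : (cc : ZMod 2) = 1 := by
        rcases Int.natAbs_eq_iff.1 hcc1 with h | h <;> rw [h] <;> decide
      have hak : a = k + 1 := by omega
      have hAz : (a : ZMod 2) = (k : ZMod 2) + 1 := by rw [hak]; push_cast; ring
      have h3' : (a : ZMod 2) * (c.p (n + 1) : ZMod 2) + (c.p n : ZMod 2) = 1 := by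
        rw [odd_nat_zmod] at h3
        have hcast := congrArg (fun z : ℕ => (z : ZMod 2)) (c.p_rec n)
        rw [← ha_def] at hcast
        push_cast at hcast
        rw [hcast] at h3
        linear_combination h3
      rw [hAz] at h3'
      rw [hccz] at hEv2
      have key : ∀ P0 P1 K : ZMod 2, (K + 1) * P1 + P0 = 1 →
          P0 + K * P1 + 1 * P1 = 0 → False := by decide
      exact key _ _ _ h3' hEv2
  -- handling an alleged pair (both-A or both-B) summing to S, assuming RHS
  have pairfact : ∀ x y : ℕ, 0 < x → 0 < y → x + y = S → x ≠ y →
      ((1 / 2 < Int.fract ((x : ℝ) / α) ∧ 1 / 2 < Int.fract ((y : ℝ) / α)) ∨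
       (Int.fract ((x : ℝ) / α) < 1 / 2 ∧ Int.fract ((y : ℝ) / α) < 1 / 2)) →
      (Even (c.p (n + 1)) ∨ (k = 1 ∧ Odd (c.p n)) ∨ (k = a - 1 ∧ Odd (c.p (n + 2)))) →
      False := by
    intro x y hx0 hy0 hsum hxy hmem hRHS
    set gx := Int.fract ((x : ℝ) / α) with hgx_def
    set gy := Int.fract ((y : ℝ) / α) with hgy_def
    set ux := ⌊(x : ℝ) / α⌋ with hux_def
    set uy := ⌊(y : ℝ) / α⌋ with huy_def
    have hgxe : (x : ℝ) / α = ux + gx := by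
      rw [hgx_def, hux_def]; exact (Int.floor_add_fract _).symm
    have hgye : (y : ℝ) / α = uy + gy := by
      rw [hgy_def, huy_def]; exact (Int.floor_add_fract _).symm
    have hirrx : Irrational ((x : ℝ) / α) := hirr.natCast_div (by omega)
    have hirry : Irrational ((y : ℝ) / α) := hirr.natCast_div (by omega)
    have hgx0 : 0 < gx := fract_pos_irr hirrx
    have hgy0 : 0 < gy := fract_pos_irr hirry
    have hgx1 : gx < 1 := Int.fract_lt_one _
    have hgy1 : gy < 1 := Int.fract_lt_one _
    clear_value gx gy ux uy
    have hxyS : (x : ℝ) + (y : ℝ) = (S : ℝ) := by exact_mod_cast hsum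
    have hxS : x < S := by omega
    have hM : gx + gy = ((Qb : ℝ) - ux - uy) + σ * ε := by
      have h1 : (x : ℝ) / α + (y : ℝ) / α = (S : ℝ) / α := by
        rw [← hxyS]; ring
      linarith [hsq, hgxe, hgye, h1]
    set M : ℤ := (Qb : ℤ) - ux - uy with hM_def
    clear_value M
    have hMR : (M : ℝ) = (Qb : ℝ) - ux - uy := by rw [hM_def]; push_cast; ring
    rw [← hMR] at hM
    have hx2S : (2 * (x : ℤ)) < 2 * (S : ℤ) := by
      have : (x : ℤ) < S := by exact_mod_cast hxS
      omega
    have hx0Z : (0 : ℤ) < 2 * (x : ℤ) := by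
      have : (0 : ℤ) < (x : ℤ) := by exact_mod_cast hx0
      omega
    rcases hσcases with hσ1 | hσm1
    · rcases hmem with ⟨hx2, hy2⟩ | ⟨hx2, hy2⟩
      · -- σ = 1, A-A : parity case with (2x, 2ux+1)
        rw [hσ1, one_mul] at hM
        have hM1 : M = 1 := by
          have h1 : (0 : ℝ) < M := by linarith
          have h2 : (M : ℝ) < 2 := by linarith
          have hi1 : 0 < M := by exact_mod_cast h1
          have hi2 : M < 2 := by exact_mod_cast h2
          omega
        rw [hM1] at hM
        push_cast at hM
        have hvv : ((2 * (x : ℤ) : ℤ) : ℝ) / α - ((2 * ux + 1 : ℤ) : ℝ) = 2 * gx - 1 := by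
          push_cast
          rw [mul_div_assoc, hgxe]
          ring
        obtain ⟨cc, hxcc, -, hcck, hccak, -⟩ :=
          core (2 * (x : ℤ)) (2 * ux + 1) hx0Z (by exact_mod_cast hx2S)
            (by rw [hvv, hσ1]; linarith) (by rw [hvv, hσ1]; linarith)
        have hcc0 : cc ≠ 0 := by
          intro h0
          rw [h0] at hxcc
          simp at hxcc
          have h2x : 2 * x = S := by exact_mod_cast hxcc
          omega
        exact parity_contra cc hcc0 hcck hccak ⟨(x : ℤ), by linear_combination -hxcc⟩ hRHS
      · -- σ = 1, B-B : short case with (x, ux)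
        rw [hσ1, one_mul] at hM
        have hM0 : M = 0 := by
          have h1 : (-1 : ℝ) < M := by linarith
          have h2 : (M : ℝ) < 1 := by linarith
          have hi1 : -1 < M := by exact_mod_cast h1
          have hi2 : M < 1 := by exact_mod_cast h2
          omega
        rw [hM0] at hM
        push_cast at hM
        have hvv : (((x : ℤ) : ℤ) : ℝ) / α - ((ux : ℤ) : ℝ) = gx := by
          push_cast
          rw [hgxe]
          ring
        obtain ⟨cc, hxcc, -, -, -, hval1⟩ :=
          core (x : ℤ) ux (by exact_mod_cast hx0) (by
              have : (x : ℤ) < S := by exact_mod_cast hxS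
              omega)
            (by rw [hvv, hσ1]; linarith) (by rw [hvv, hσ1]; linarith)
        rw [hvv, hσ1, one_mul] at hval1
        -- gx = ε - cc f with gx < ε forces cc ≥ 1, so x > S: contradiction
        have hccpos : (0 : ℝ) < (cc : ℝ) * f := by linarith
        have hcc1 : (1 : ℤ) ≤ cc := by
          by_contra hc
          push_neg at hc
          have : cc ≤ 0 := by omega
          have : (cc : ℝ) ≤ 0 := by exact_mod_cast this
          nlinarith
        have hp1Z : (1 : ℤ) ≤ (c.p (n + 1) : ℤ) := by exact_mod_cast hpn1
        have h5 : 1 * (c.p (n + 1) : ℤ) ≤ cc * c.p (n + 1) :=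
          mul_le_mul_of_nonneg_right hcc1 (by linarith)
        have h6 : (x : ℤ) < S := by exact_mod_cast hxS
        linarith [hxcc]
    · rcases hmem with ⟨hx2, hy2⟩ | ⟨hx2, hy2⟩
      · -- σ = -1, A-A : short case with (x, ux + 1)
        rw [hσm1] at hM
        have hM2 : M = 2 := by
          have h1 : (1 : ℝ) < M := by linarith
          have h2 : (M : ℝ) < 3 := by linarith
          have hi1 : 1 < M := by exact_mod_cast h1
          have hi2 : M < 3 := by exact_mod_cast h2
          omega
        rw [hM2] at hM
        push_cast at hM
        have hvv : (((x : ℤ) : ℤ) : ℝ) / α - ((ux + 1 : ℤ) : ℝ) = gx - 1 := by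
          push_cast
          rw [hgxe]
          ring
        obtain ⟨cc, hxcc, -, -, -, hval1⟩ :=
          core (x : ℤ) (ux + 1) (by exact_mod_cast hx0) (by
              have : (x : ℤ) < S := by exact_mod_cast hxS
              omega)
            (by rw [hvv, hσm1]; linarith) (by rw [hvv, hσm1]; linarith)
        rw [hvv, hσm1] at hval1
        have hccpos : (0 : ℝ) < (cc : ℝ) * f := by linarith
        have hcc1 : (1 : ℤ) ≤ cc := by
          by_contra hc
          push_neg at hc
          have h7 : cc ≤ 0 := by omega
          have h8 : (cc : ℝ) ≤ 0 := by exact_mod_cast h7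
          nlinarith
        have hp1Z : (1 : ℤ) ≤ (c.p (n + 1) : ℤ) := by exact_mod_cast hpn1
        have h5 : 1 * (c.p (n + 1) : ℤ) ≤ cc * c.p (n + 1) :=
          mul_le_mul_of_nonneg_right hcc1 (by linarith)
        have h6 : (x : ℤ) < S := by exact_mod_cast hxS
        linarith [hxcc]
      · -- σ = -1, B-B : parity case with (2x, 2ux+1)
        rw [hσm1] at hM
        have hM1 : M = 1 := by
          have h1 : (0 : ℝ) < M := by linarith
          have h2 : (M : ℝ) < 2 := by linarith
          have hi1 : 0 < M := by exact_mod_cast h1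
          have hi2 : M < 2 := by exact_mod_cast h2
          omega
        rw [hM1] at hM
        push_cast at hM
        have hvv : ((2 * (x : ℤ) : ℤ) : ℝ) / α - ((2 * ux + 1 : ℤ) : ℝ) = 2 * gx - 1 := by
          push_cast
          rw [mul_div_assoc, hgxe]
          ring
        obtain ⟨cc, hxcc, -, hcck, hccak, -⟩ :=
          core (2 * (x : ℤ)) (2 * ux + 1) hx0Z (by exact_mod_cast hx2S)
            (by rw [hvv, hσm1]; linarith) (by rw [hvv, hσm1]; linarith)
        have hcc0 : cc ≠ 0 := by
          intro h0
          rw [h0] at hxcc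
          simp at hxcc
          have h2x : 2 * x = S := by exact_mod_cast hxcc
          omega
        exact parity_contra cc hcc0 hcck hccak ⟨(x : ℤ), by linear_combination -hxcc⟩ hRHS
  -- building an actual pair from a suitable positive cc (used for ⟶ direction)
  have build : S ∈ Sset α → ∀ cc : ℕ, 1 ≤ cc → cc ≤ k → cc ≤ a - k →
      Even (S + cc * c.p (n + 1)) → False := by
    intro hSmem cc hcc1 hcck hccak hEvY
    set Y : ℕ := S + cc * c.p (n + 1) with hY_def
    set U : ℕ := Qb + cc * c.q (n + 1) with hU_def
    clear_value Y U
    obtain ⟨x', hx'⟩ := hEvY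
    set μ : ℝ := ε - cc * f with hμ_def
    clear_value μ
    have hccR : ((cc : ℕ) : ℝ) ≤ ((a - k : ℕ) : ℝ) := by exact_mod_cast hccak
    have hccf1 : (cc : ℝ) * f ≤ ((a - k : ℕ) : ℝ) * f :=
      mul_le_mul_of_nonneg_right hccR (le_of_lt hf_pos)
    have hcc1R : (1 : ℝ) ≤ (cc : ℝ) := by exact_mod_cast hcc1
    have hμ_pos : 0 < μ := by
      rw [hμ_def]
      have := hεf
      linarith
    have hμ_lt : μ < ε := by
      rw [hμ_def]
      nlinarith
    have hYα : (Y : ℝ) / α - (U : ℝ) = σ * μ := by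
      have h1 : (Y : ℝ) / α - (U : ℝ) = ((S : ℝ) / α - (Qb : ℝ)) + cc * ee α c (n + 1) := by
        rw [hY_def, hU_def]
        unfold ee
        push_cast
        field_simp
        ring
      rw [h1, hsq, hμ_def, hf_def]
      linear_combination (-(cc : ℝ) * ee α c (n + 1)) * hσ2
    have hYx' : Y = 2 * x' := by omega
    have hYgt : S < Y := by
      rw [hY_def]
      have h9 : 0 < cc * c.p (n + 1) := Nat.mul_pos (by omega) hpn1
      omega
    have hY2S : Y < 2 * S := by
      have h2 : cc * c.p (n + 1) ≤ k * c.p (n + 1) := Nat.mul_le_mul_right _ hcck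
      have h3 : k * c.p (n + 1) < S := by
        rw [hS_def]
        exact Nat.lt_add_of_pos_left hpn
      rw [hY_def]
      omega
    have hx'S : x' < S := by omega
    have hx'0 : 0 < x' := by omega
    set y' : ℕ := S - x' with hy'_def
    clear_value y'
    have hy'0 : 0 < y' := by omega
    have hx'y' : x' + y' = S := by omega
    have hne : x' ≠ y' := by
      intro h
      omega
    -- U is odd (forced by the determinant identity mod 2)
    have hUO : Odd U := by
      have hEY : (c.p n : ZMod 2) + (k : ZMod 2) * (c.p (n + 1) : ZMod 2)
          + (cc : ZMod 2) * (c.p (n + 1) : ZMod 2) = 0 := by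
        have h9 := (even_nat_zmod Y).1 ⟨x', hx'⟩
        rw [hY_def, hS_def] at h9
        push_cast at h9
        linear_combination h9
      rw [odd_nat_zmod, hU_def, hQb_def]
      push_cast
      have key : ∀ P0 P1 Q0 Q1 K C : ZMod 2, P1 * Q0 - P0 * Q1 = 1 →
          P0 + K * P1 + C * P1 = 0 → Q0 + K * Q1 + C * Q1 = 1 := by decide
      exact key _ _ _ _ _ _ hdet2 hEY
    obtain ⟨h, hh⟩ := hUO
    have hY2R : (Y : ℝ) = 2 * (x' : ℝ) := by exact_mod_cast hYx'
    have hU2R : (U : ℝ) = 2 * (h : ℝ) + 1 := by exact_mod_cast hh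
    have hx'α : (x' : ℝ) / α = (h : ℝ) + (1 + σ * μ) / 2 := by
      rw [hY2R, hU2R] at hYα
      have h4 : 2 * (x' : ℝ) / α = 2 * ((x' : ℝ) / α) := by ring
      rw [h4] at hYα
      linarith
    have hσμb : -(1 : ℝ) < σ * μ ∧ σ * μ < 1 := by
      rcases hσcases with h9 | h9 <;> rw [h9] <;> constructor <;> linarith
    have hfx' : Int.fract ((x' : ℝ) / α) = (1 + σ * μ) / 2 := by
      have hfr1 : Int.fract ((1 + σ * μ) / 2) = (1 + σ * μ) / 2 :=
        Int.fract_eq_self.2 ⟨by linarith [hσμb.1], by linarith [hσμb.2]⟩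
      rw [hx'α, show ((h : ℕ) : ℝ) = ((h : ℤ) : ℝ) by push_cast; ring, Int.fract_intCast_add,
        hfr1]
    have hy'R : (y' : ℝ) = (S : ℝ) - (x' : ℝ) := by
      have h9 : ((x' : ℕ) : ℝ) + ((y' : ℕ) : ℝ) = (S : ℝ) := by exact_mod_cast hx'y'
      linarith
    have hy'α : (y' : ℝ) / α = ((Qb : ℝ) - (h : ℝ) - 1) + (1 + σ * (2 * ε - μ)) / 2 := by
      have h5 : (y' : ℝ) / α = (S : ℝ) / α - (x' : ℝ) / α := by rw [hy'R]; ring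
      have h6 : (S : ℝ) / α = (Qb : ℝ) + σ * ε := by linarith [hsq]
      rw [h5, hx'α, h6]
      ring
    have h2εμ : 0 < 2 * ε - μ ∧ 2 * ε - μ < 1 := ⟨by linarith, by linarith⟩
    have hσ2b : -(1 : ℝ) < σ * (2 * ε - μ) ∧ σ * (2 * ε - μ) < 1 := by
      rcases hσcases with h9 | h9 <;> rw [h9] <;>
        exact ⟨by linarith [h2εμ.1, h2εμ.2], by linarith [h2εμ.1, h2εμ.2]⟩
    have hfy' : Int.fract ((y' : ℝ) / α) = (1 + σ * (2 * ε - μ)) / 2 := by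
      have hfr1 : Int.fract ((1 + σ * (2 * ε - μ)) / 2) = (1 + σ * (2 * ε - μ)) / 2 :=
        Int.fract_eq_self.2 ⟨by linarith [hσ2b.1], by linarith [hσ2b.2]⟩
      rw [hy'α, show ((Qb : ℝ) - (h : ℝ) - 1) = (((Qb : ℤ) - h - 1 : ℤ) : ℝ) by
        push_cast; ring, Int.fract_intCast_add, hfr1]
    rcases hσcases with hσ1 | hσm1
    · have hxA : x' ∈ Aset α := (memA_iff hα hirr x').2 ⟨hx'0, by rw [hfx', hσ1]; linarith⟩
      have hyA : y' ∈ Aset α := (memA_iff hα hirr y').2 ⟨hy'0, by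
        rw [hfy', hσ1]; linarith [h2εμ.1]⟩
      exact hSmem.2.1 x' hxA y' hyA hne hx'y'
    · have hxB : x' ∈ Bset α := (memB_iff hα hirr x').2 ⟨hx'0, by rw [hfx', hσm1]; linarith⟩
      have hyB : y' ∈ Bset α := (memB_iff hα hirr y').2 ⟨hy'0, by
        rw [hfy', hσm1]; linarith [h2εμ.1]⟩
      exact hSmem.2.2 x' hxB y' hyB hne hx'y'
  -- final assembly
  constructor
  · intro hSmem
    by_contra hR
    push_neg at hR
    obtain ⟨hR1, hR2, hR3⟩ := hR
    have hodd1 : Odd (c.p (n + 1)) := Nat.not_even_iff_odd.1 hR1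
    have hP1 : (c.p (n + 1) : ZMod 2) = 1 := (odd_nat_zmod _).1 hodd1
    by_cases hkp : Even (k + c.p n)
    · -- choose cc = 2
      have hKP : (k : ZMod 2) + (c.p n : ZMod 2) = 0 := by
        have h9 := (even_nat_zmod _).1 hkp
        push_cast at h9
        exact h9
      have hk2' : 2 ≤ k := by
        rcases Nat.lt_or_ge k 2 with h | h
        · exfalso
          have hk1'' : k = 1 := by omega
          have hpnodd : Odd (c.p n) := by
            rw [odd_nat_zmod]
            rw [hk1''] at hKP
            push_cast at hKP
            have key : ∀ P0 : ZMod 2, (1 : ZMod 2) + P0 = 0 → P0 = 1 := by decide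
            exact key _ hKP
          exact hR2 hk1'' hpnodd
        · exact h
      have hak2 : 2 ≤ a - k := by
        rcases Nat.lt_or_ge (a - k) 2 with h | h
        · exfalso
          have hka1 : k = a - 1 := by omega
          have haK : a = k + 1 := by omega
          have hp2odd : Odd (c.p (n + 2)) := by
            rw [odd_nat_zmod]
            have hcast := congrArg (fun z : ℕ => (z : ZMod 2)) (c.p_rec n)
            rw [← ha_def] at hcast
            push_cast at hcast
            have hAz : (a : ZMod 2) = (k : ZMod 2) + 1 := by rw [haK]; push_cast; ring
            rw [hcast, hP1, hAz]
            have key : ∀ P0 K : ZMod 2, K + P0 = 0 → (K + 1) * 1 + P0 = 1 := by decide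
            exact key _ _ hKP
          exact hR3 hka1 hp2odd
        · exact h
      apply build hSmem 2 (by omega) (by omega) (by omega)
      rw [even_nat_zmod, hS_def]
      push_cast
      rw [hP1]
      have key : ∀ P0 K : ZMod 2, K + P0 = 0 → P0 + K * 1 + 2 * 1 = 0 := by decide
      exact key _ _ hKP
    · -- choose cc = 1
      have hkodd : Odd (k + c.p n) := Nat.not_even_iff_odd.1 hkp
      have hKP : (k : ZMod 2) + (c.p n : ZMod 2) = 1 := by
        have h9 := (odd_nat_zmod _).1 hkodd
        push_cast at h9
        exact h9
      apply build hSmem 1 le_rfl hk1 hak1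
      rw [even_nat_zmod, hS_def]
      push_cast
      rw [hP1]
      have key : ∀ P0 K : ZMod 2, K + P0 = 1 → P0 + K * 1 + 1 * 1 = 0 := by decide
      exact key _ _ hKP
  · intro hR
    refine ⟨hS_pos, ?_, ?_⟩
    · intro x hxA y hyA hxy hsum
      rw [memA_iff hα hirr] at hxA hyA
      exact pairfact x y hxA.1 hyA.1 hsum hxy (Or.inl ⟨hxA.2, hyA.2⟩) hR
    · intro x hxB y hyB hxy hsum
      rw [memB_iff hα hirr] at hxB hyB
      exact pairfact x y hxB.1 hyB.1 hsum hxy (Or.inr ⟨hxB.2, hyB.2⟩) hR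
end

section
/- Let S ⊆ ℕ⁺ contain d, a+d, c, and b+c where gcd(a,b) = 1, a ≤ c, and b ≤ d. Then all positive integers less than a + b lie in the same connected component of the graph G(S). -/
/-- The graph `G S` on the positive integers with an edge between distinct
`x, y` whenever `x + y ∈ S`. -/
def G (S : Set ℕ+) : SimpleGraph ℕ+ where
  Adj x y := x ≠ y ∧ x + y ∈ S
  symm := by
    constructor
    intro x y h
    exact ⟨h.1.symm, by rw [add_comm]; exact h.2⟩
  loopless := by
    constructor
    intro x h
    exact h.1 rfl

/-- The partition `{A, Aᶜ}` of `ℕ+` avoids `S`: no two distinct elements of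
the same part sum to an element of `S`. -/
def Avoids (A S : Set ℕ+) : Prop :=
  (∀ x ∈ A, ∀ y ∈ A, x ≠ y → x + y ∉ S) ∧
  (∀ x ∈ Aᶜ, ∀ y ∈ Aᶜ, x ≠ y → x + y ∉ S)

/-- `S` is avoidable: some partition of `ℕ+` avoids it. -/
def Avoidable (S : Set ℕ+) : Prop := ∃ A, Avoids A S

/-- `S` is uniquely avoidable: exactly one partition of `ℕ+` avoids it. -/
def UniquelyAvoidable (S : Set ℕ+) : Prop :=
  ∃ A, Avoids A S ∧ ∀ A', Avoids A' S → A' = A ∨ A' = Aᶜ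

lemma step_reach (S : Set ℕ+) (a d : ℕ+) (hd : d ∈ S) (had : a + d ∈ S)
    (x : ℕ+) (hx : (x:ℕ) < (d:ℕ)) : (G S).Reachable x (x + a) := by
  have hne : ∀ (u v : ℕ+), (u:ℕ) ≠ (v:ℕ) → u ≠ v := fun u v h huv => h (congrArg _ huv)
  have peq : ∀ (u v : ℕ+), (u:ℕ) = (v:ℕ) → u = v := fun u v h => PNat.coe_injective h
  have ha : 0 < (a:ℕ) := a.pos
  by_cases h1 : (d:ℕ) = 2 * x
  · refine SimpleGraph.Adj.reachable ⟨hne _ _ (by push_cast; omega), ?_⟩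
    have : x + (x + a) = a + d := peq _ _ (by push_cast; omega)
    rw [this]; exact had
  by_cases h2 : (d:ℕ) = 2 * x + a
  · refine SimpleGraph.Adj.reachable ⟨hne _ _ (by push_cast; omega), ?_⟩
    have : x + (x + a) = d := peq _ _ (by push_cast; omega)
    rw [this]; exact hd
  · set z : ℕ+ := ⟨(d:ℕ) - x, by omega⟩ with hz
    have hzc : (z:ℕ) = (d:ℕ) - x := rfl
    have e1 : (G S).Adj x z := by
      refine ⟨hne _ _ (by omega), ?_⟩
      have : x + z = d := peq _ _ (by push_cast [hzc]; omega)
      rw [this]; exact hd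
    have e2 : (G S).Adj z (x + a) := by
      refine ⟨hne _ _ (by push_cast [hzc]; omega), ?_⟩
      have : z + (x + a) = a + d := peq _ _ (by push_cast [hzc]; omega)
      rw [this]; exact had
    exact e1.reachable.trans e2.reachable

/-- If `S` contains `d`, `a + d`, `c`, `b + c` with `gcd a b = 1`, `a ≤ c` and
`b ≤ d`, then all positive integers less than `a + b` lie in the same
connected component of `G S`. -/
theorem stmt13 (S : Set ℕ+) (a b c d : ℕ+)
    (hab : Nat.Coprime a b) (hac : a ≤ c) (hbd : b ≤ d)
    (hd : d ∈ S) (had : a + d ∈ S) (hc : c ∈ S) (hbc : b + c ∈ S) :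
    ∀ x y : ℕ+, x < a + b → y < a + b → (G S).Reachable x y := by
  have peq : ∀ (u v : ℕ+), (u:ℕ) = (v:ℕ) → u = v := fun u v h => PNat.coe_injective h
  set n : ℕ := (a:ℕ) + (b:ℕ) with hn
  have ha : 0 < (a:ℕ) := a.pos
  have hb : 0 < (b:ℕ) := b.pos
  have hn2 : 2 ≤ n := by omega
  -- coprimality of a and n
  have hab' : Nat.Coprime (a:ℕ) n := by
    have := (Nat.coprime_add_mul_right_right (a:ℕ) (b:ℕ) 1).mpr hab
    simpa [hn, one_mul, Nat.add_comm] using this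
  -- nonzero residues
  have hnz : ∀ k : ℕ, 1 ≤ k → k < n → (a:ℕ) * k % n ≠ 0 := by
    intro k hk1 hk2 h0
    have hdvd : n ∣ (a:ℕ) * k := Nat.dvd_of_mod_eq_zero h0
    have : n ∣ k := (Nat.Coprime.dvd_of_dvd_mul_left hab'.symm) hdvd
    have := Nat.le_of_dvd (by omega) this
    omega
  have lemA : ∀ x : ℕ+, (x:ℕ) < (b:ℕ) → (G S).Reachable x (x + a) :=
    fun x hx => step_reach S a d hd had x (by have := hbd; exact lt_of_lt_of_le hx this)
  have lemB : ∀ x : ℕ+, (x:ℕ) < (a:ℕ) → (G S).Reachable x (x + b) :=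
    fun x hx => step_reach S b c hc hbc x (lt_of_lt_of_le hx hac)
  -- main induction along the cycle
  have main : ∀ k : ℕ, 1 ≤ k → k < n → ∀ (h : 0 < (a:ℕ) * k % n),
      (G S).Reachable a ⟨(a:ℕ) * k % n, h⟩ := by
    intro k
    induction k with
    | zero => omega
    | succ k ih =>
      intro hk1 hk2 hpos
      rcases Nat.eq_zero_or_pos k with hk0 | hkpos
      · subst hk0
        have hv : (⟨(a:ℕ) * 1 % n, hpos⟩ : ℕ+) = a := by
          apply peq
          rw [PNat.mk_coe, mul_one, Nat.mod_eq_of_lt (by omega)]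
        rw [hv]
      · have hxnz : (a:ℕ) * k % n ≠ 0 := hnz k hkpos (by omega)
        set x : ℕ := (a:ℕ) * k % n with hxdef
        have hxlt : x < n := Nat.mod_lt _ (by omega)
        have hyx : (a:ℕ) * (k+1) % n = (x + (a:ℕ)) % n := by
          show (a:ℕ)*(k+1) ≡ x + (a:ℕ) [MOD n]
          calc (a:ℕ)*(k+1) = (a:ℕ)*k + a := by ring
          _ ≡ x + (a:ℕ) [MOD n] := Nat.ModEq.add_right _ (Nat.mod_modEq _ n).symm
        have hxb : x ≠ (b:ℕ) := by
          intro hxb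
          have : (x + (a:ℕ)) % n = 0 := by rw [hxb]; simp [hn, Nat.add_comm]
          rw [← hyx] at this
          omega
        have hreach_x : (G S).Reachable a ⟨x, Nat.pos_of_ne_zero hxnz⟩ :=
          ih hkpos (by omega) (Nat.pos_of_ne_zero hxnz)
        rcases lt_or_gt_of_ne hxb with hlt | hgt
        · -- x < b : y = x + a
          have hy : (a:ℕ) * (k+1) % n = x + (a:ℕ) := by
            rw [hyx, Nat.mod_eq_of_lt (by omega)]
          have hstep := lemA ⟨x, Nat.pos_of_ne_zero hxnz⟩ hlt
          have hv : (⟨x, Nat.pos_of_ne_zero hxnz⟩ + a : ℕ+) = ⟨(a:ℕ)*(k+1) % n, hpos⟩ :=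
            peq _ _ (by push_cast [hy, PNat.mk_coe]; rfl)
          rw [hv] at hstep
          exact hreach_x.trans hstep
        · -- x > b : y = x - b
          have hy : (a:ℕ) * (k+1) % n = x - (b:ℕ) := by
            rw [hyx]
            have h1 : x + (a:ℕ) - n < n := by omega
            have : (x + (a:ℕ)) % n = x + (a:ℕ) - n := by
              rw [Nat.mod_eq_sub_mod (by omega), Nat.mod_eq_of_lt h1]
            omega
          have hylt : x - (b:ℕ) < (a:ℕ) := by omega
          have hstep := lemB ⟨(a:ℕ)*(k+1) % n, hpos⟩
            (by show (a:ℕ)*(k+1) % n < (a:ℕ); omega)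
          have hv : (⟨(a:ℕ)*(k+1) % n, hpos⟩ + b : ℕ+) = ⟨x, Nat.pos_of_ne_zero hxnz⟩ :=
            peq _ _ (by show (a:ℕ)*(k+1) % n + (b:ℕ) = x; omega)
          rw [hv] at hstep
          exact hreach_x.trans hstep.symm
  -- every positive integer below n is reachable from a
  have key : ∀ z : ℕ+, (z:ℕ) < n → (G S).Reachable a z := by
    intro z hz
    haveI : NeZero n := ⟨by omega⟩
    set k : ℕ := (((a:ℕ) : ZMod n)⁻¹ * ((z:ℕ) : ZMod n)).val with hkdef
    have hunit : IsUnit ((a:ℕ) : ZMod n) :=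
      ⟨ZMod.unitOfCoprime _ hab', ZMod.coe_unitOfCoprime _ hab'⟩
    have hcast : (((a:ℕ) * k : ℕ) : ZMod n) = ((z:ℕ) : ZMod n) := by
      push_cast [hkdef]
      rw [ZMod.natCast_val, ZMod.cast_id, ← mul_assoc, ZMod.mul_inv_of_unit _ hunit, one_mul]
    have hmod : (a:ℕ) * k % n = (z:ℕ) % n := (ZMod.natCast_eq_natCast_iff _ _ _).mp hcast
    have hzmod : (z:ℕ) % n = (z:ℕ) := Nat.mod_eq_of_lt hz
    have hmod' : (a:ℕ) * k % n = (z:ℕ) := by rw [hmod, hzmod]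
    have hk1 : 1 ≤ k := by
      rcases Nat.eq_zero_or_pos k with h0 | h; swap;· omega
      rw [h0, Nat.mul_zero, Nat.zero_mod] at hmod'
      have := z.pos; omega
    have hklt : k < n := ZMod.val_lt _
    have := main k hk1 hklt (by rw [hmod']; exact z.pos)
    have hv : (⟨(a:ℕ) * k % n, by rw [hmod']; exact z.pos⟩ : ℕ+) = z := peq _ _ (by simp [hmod'])
    rwa [hv] at this
  intro x y hx hy
  have hx' : (x:ℕ) < n := by
    rw [hn, ← PNat.add_coe]; exact (PNat.coe_lt_coe x (a+b)).mpr hx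
  have hy' : (y:ℕ) < n := by
    rw [hn, ← PNat.add_coe]; exact (PNat.coe_lt_coe y (a+b)).mpr hy
  exact (key x hx').symm.trans (key y hy')
end

section
/- Let S ⊆ ℕ⁺. If for every N there exist a, b, c, d with a + b > N, gcd(a,b) = 1, a ≤ c, b ≤ d, and d, a+d, c, b+c all in S, then G(S) is connected; hence if S is avoidable, it is uniquely avoidable. -/
/-- Key step: if `v ∈ S` and `u + v ∈ S`, then `x` is connected to `x + u`
in `G S` whenever `x < v`. -/
lemma step_lemma (S : Set ℕ+) (u v : ℕ+) (hv : v ∈ S) (huv : u + v ∈ S)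
    (x : ℕ+) (hx : x < v) : (G S).Reachable x (x + u) := by
  have hxu : x ≠ x + u := by
    intro h
    have : (x : ℕ) = x + u := congrArg _ h
    have := u.pos
    omega
  by_cases hA : x + x = v
  · refine SimpleGraph.Adj.reachable (⟨hxu, ?_⟩ : (G S).Adj x (x + u))
    have : x + (x + u) = u + v := by
      rw [← hA]; ring
    rw [this]; exact huv
  · by_cases hB : x + (x + u) = v
    · exact SimpleGraph.Adj.reachable (⟨hxu, by rw [hB]; exact hv⟩ : (G S).Adj x (x + u))
    · have hxv : (x : ℕ) < v := hx
      obtain ⟨w, hw⟩ : ∃ w : ℕ+, x + w = v := by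
        refine ⟨⟨(v : ℕ) - x, by omega⟩, ?_⟩
        apply PNat.coe_injective
        push_cast
        show (x : ℕ) + ((v : ℕ) - x) = v
        omega
      have e1 : (G S).Adj x w := by
        refine ⟨?_, by rw [hw]; exact hv⟩
        intro h; apply hA; nth_rewrite 2 [h]; exact hw
      have e2 : (G S).Adj w (x + u) := by
        refine ⟨?_, ?_⟩
        · intro h; apply hB; rw [← h]; exact hw
        · have : w + (x + u) = u + v := by rw [← hw]; ring
          rw [this]; exact huv
      exact e1.reachable.trans e2.reachable

/-- From a quadruple as in the hypothesis, every `n < a + b` is reachable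
from `a` in `G S`. -/
lemma chain_lemma (S : Set ℕ+) (a b c d : ℕ+) (hab : Nat.Coprime a b)
    (hac : a ≤ c) (hbd : b ≤ d) (hd : d ∈ S) (had : a + d ∈ S)
    (hc : c ∈ S) (hbc : b + c ∈ S) :
    ∀ n : ℕ+, (n : ℕ) < (a : ℕ) + (b : ℕ) → (G S).Reachable a n := by
  set A : ℕ := (a : ℕ) with hA
  set B : ℕ := (b : ℕ) with hB
  set M : ℕ := A + B with hM
  have hApos : 0 < A := a.pos
  have hBpos : 0 < B := b.pos
  have hMpos : 0 < M := by omega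
  have hcop : Nat.Coprime A M := by
    have : Nat.Coprime A (B + A) := (Nat.coprime_add_self_right).mpr hab
    simpa [hM, Nat.add_comm] using this
  have hnz : ∀ j : ℕ, 1 ≤ j → j < M → (j * A) % M ≠ 0 := by
    intro j hj1 hjM hmod
    have hdvd : M ∣ j * A := Nat.dvd_of_mod_eq_zero hmod
    have : M ∣ j := (Nat.Coprime.dvd_of_dvd_mul_right (Nat.Coprime.symm hcop)) hdvd
    have := Nat.le_of_dvd (by omega) this
    omega
  have key : ∀ j : ℕ, 1 ≤ j → j < M → ∀ hpos : 0 < (j * A) % M,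
      (G S).Reachable a ⟨(j * A) % M, hpos⟩ := by
    intro j hj1
    induction j, hj1 using Nat.le_induction with
    | base =>
      intro _ hpos
      have hlt : A < M := by omega
      have : (⟨(1 * A) % M, hpos⟩ : ℕ+) = a := by
        apply Subtype.ext
        simp only [one_mul, Nat.mod_eq_of_lt hlt]
        rfl
      rw [this]
    | succ j hj1 ih =>
      intro hj1M hpos
      have hjM : j < M := by omega
      have hpnz : (j * A) % M ≠ 0 := hnz j hj1 hjM
      have hppos : 0 < (j * A) % M := Nat.pos_of_ne_zero hpnz
      set p : ℕ := (j * A) % M with hp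
      set q : ℕ := ((j + 1) * A) % M with hq
      have hqnz : q ≠ 0 := hnz (j + 1) (by omega) hj1M
      have hpM : p < M := Nat.mod_lt _ hMpos
      have hqM : q < M := Nat.mod_lt _ hMpos
      have hqe : q = (p + A) % M := by
        have h1 : (p + A) % M = (j * A + A) % M :=
          Nat.ModEq.add_right A (Nat.mod_modEq (j * A) M)
        rw [hq, add_mul, one_mul, h1]
      have hreach_p := ih hjM hppos
      by_cases hcase : p + A < M
      · have hqpa : q = p + A := by rw [hqe, Nat.mod_eq_of_lt hcase]
        have hpd : (⟨p, hppos⟩ : ℕ+) < d := by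
          have hBd : B ≤ (d : ℕ) := hbd
          show p < (d : ℕ)
          omega
        have hstep := step_lemma S a d hd had ⟨p, hppos⟩ hpd
        have heq : (⟨p, hppos⟩ + a : ℕ+) = ⟨q, hpos⟩ := by
          apply Subtype.ext
          show p + A = q
          omega
        rw [heq] at hstep
        exact hreach_p.trans hstep
      · have hle : M ≤ p + A := by omega
        have hsub : (p + A) % M = p + A - M := by
          rw [Nat.mod_eq_sub_mod hle, Nat.mod_eq_of_lt (by omega)]
        have hqeq : q + B = p := by
          rw [hqe, hsub] at *
          omega
        have hqA : q < A := by omega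
        have hqc : (⟨q, Nat.pos_of_ne_zero hqnz⟩ : ℕ+) < c := by
          have hAc : A ≤ (c : ℕ) := hac
          show q < (c : ℕ)
          omega
        have hstep := step_lemma S b c hc hbc ⟨q, Nat.pos_of_ne_zero hqnz⟩ hqc
        have heq : (⟨q, Nat.pos_of_ne_zero hqnz⟩ + b : ℕ+) = ⟨p, hppos⟩ := by
          apply Subtype.ext
          show q + B = p
          exact hqeq
        rw [heq] at hstep
        exact hreach_p.trans hstep.symm
  intro n hn
  have hnpos : 0 < (n : ℕ) := n.pos
  set φ : ℕ := Nat.totient M with hφ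
  have hφpos : 0 < φ := Nat.totient_pos.mpr hMpos
  set j : ℕ := ((n : ℕ) * A ^ (φ - 1)) % M with hj
  have hmodeq : j * A ≡ (n : ℕ) [MOD M] := by
    calc j * A ≡ ((n : ℕ) * A ^ (φ - 1)) * A [MOD M] :=
          Nat.ModEq.mul_right A (Nat.mod_modEq _ _)
      _ = (n : ℕ) * A ^ φ := by
          rw [mul_assoc, ← pow_succ]
          congr 2
          omega
      _ ≡ (n : ℕ) * 1 [MOD M] := Nat.ModEq.mul_left _ (Nat.ModEq.pow_totient hcop)
      _ = (n : ℕ) := by ring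
  have hjA : (j * A) % M = (n : ℕ) := by
    have := hmodeq
    unfold Nat.ModEq at this
    rw [this, Nat.mod_eq_of_lt hn]
  have hj1 : 1 ≤ j := by
    rcases Nat.eq_zero_or_pos j with h0 | h0
    · rw [h0] at hjA; simp at hjA; omega
    · exact h0
  have hjM : j < M := Nat.mod_lt _ hMpos
  have hpos : 0 < (j * A) % M := by rw [hjA]; exact hnpos
  have := key j hj1 hjM hpos
  have heq : (⟨(j * A) % M, hpos⟩ : ℕ+) = n := Subtype.ext hjA
  rwa [heq] at this

/-- Along an edge of `G S`, membership in an avoiding set flips. -/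
lemma flip_lemma (S T : Set ℕ+) (hT : Avoids T S) {x y : ℕ+}
    (hxy : (G S).Adj x y) : (x ∈ T ↔ y ∉ T) := by
  obtain ⟨hne, hsum⟩ := hxy
  constructor
  · intro hx hy
    exact hT.1 x hx y hy hne hsum
  · intro hy
    by_contra hx
    exact hT.2 x hx y hy hne hsum

/-- If for every `N` the set `S` contains `d`, `a + d`, `c`, `b + c` with
`gcd a b = 1`, `a ≤ c`, `b ≤ d` and `a + b > N`, then `G S` is connected;
hence if `S` is avoidable it is uniquely avoidable. -/
theorem stmt15 (S : Set ℕ+)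
    (h : ∀ N : ℕ, ∃ a b c d : ℕ+, N < (a : ℕ) + b ∧ Nat.Coprime a b ∧
      a ≤ c ∧ b ≤ d ∧ d ∈ S ∧ a + d ∈ S ∧ c ∈ S ∧ b + c ∈ S) :
    (G S).Connected ∧ (Avoidable S → UniquelyAvoidable S) := by
  have hconn : (G S).Connected := by
    rw [SimpleGraph.connected_iff]
    refine ⟨?_, ⟨1⟩⟩
    intro x y
    obtain ⟨a, b, c, d, hN, hab, hac, hbd, hd, had, hc, hbc⟩ := h ((x : ℕ) + (y : ℕ))
    have hypos : 0 < (y : ℕ) := y.pos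
    have hxpos : 0 < (x : ℕ) := x.pos
    have hx := chain_lemma S a b c d hab hac hbd hd had hc hbc x (by omega)
    have hy := chain_lemma S a b c d hab hac hbd hd had hc hbc y (by omega)
    exact hx.symm.trans hy
  refine ⟨hconn, ?_⟩
  rintro ⟨A0, hA0⟩
  refine ⟨A0, hA0, ?_⟩
  intro A' hA'
  have invar : ∀ x y : ℕ+, (G S).Reachable x y →
      ((x ∈ A0 ↔ x ∈ A') ↔ (y ∈ A0 ↔ y ∈ A')) := by
    intro x y hr
    obtain ⟨w⟩ := hr
    induction w with
    | nil => exact Iff.rfl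
    | cons hadj p ih =>
      have f1 := flip_lemma S A0 hA0 hadj
      have f2 := flip_lemma S A' hA' hadj
      tauto
  by_cases hkey : ((1 : ℕ+) ∈ A0 ↔ (1 : ℕ+) ∈ A')
  · left
    ext x
    have := invar 1 x (hconn.preconnected 1 x)
    tauto
  · right
    ext x
    simp only [Set.mem_compl_iff]
    have := invar 1 x (hconn.preconnected 1 x)
    tauto
end

section
/- Let α > 1 be irrational and S_α the set of sums avoided by the partition {A_α, B_α} of ℕ⁺ given by the sign of E(n) = n − (nearest integer multiple of α). Then S_α is uniquely avoidable: {A_α, B_α} is the only partition of ℕ⁺ avoiding S_α. -/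
namespace UA

noncomputable section

def fr (θ : ℝ) (x : ℕ) : ℝ := Int.fract ((x : ℝ) * θ)
def vv (θ : ℝ) (x : ℕ) : ℝ := Int.fract (2 * (x : ℝ) * θ)
def bit (θ : ℝ) (x : ℕ) : Prop := 1/2 < fr θ x

def Sn (θ : ℝ) (s : ℕ) : Prop :=
  0 < s ∧ ∀ x y : ℕ, 0 < x → 0 < y → x ≠ y → x + y = s →
    ¬(bit θ x ∧ bit θ y) ∧ ¬(¬bit θ x ∧ ¬bit θ y)

def Edge (θ : ℝ) (x y : ℕ) : Prop := 0 < x ∧ 0 < y ∧ x ≠ y ∧ Sn θ (x + y)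
def Reach (θ : ℝ) : ℕ → ℕ → Prop := Relation.ReflTransGen (Edge θ)

def Champ (θ : ℝ) (p q : ℕ) : Prop :=
  0 < p ∧ 0 < q ∧ (p = q ∨ vv θ p < vv θ q) ∧
  ∀ x, 0 < x → x < p + q → x ≠ p → x ≠ q → vv θ p < vv θ x ∧ vv θ x < vv θ q

def Good (θ : ℝ) (p q : ℕ) : Prop :=
  Champ θ p q ∧ p ≠ q ∧ bit θ p ∧ ¬ bit θ q ∧
  ∀ z, 0 < z → z < p + q → Reach θ 1 z

lemma fract_pos_of_irr {y : ℝ} (h : Irrational y) : 0 < Int.fract y := by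
  rcases lt_or_eq_of_le (Int.fract_nonneg y) with h' | h'
  · exact h'
  · exfalso
    have hy : y = (⌊y⌋ : ℝ) := by
      have := Int.fract_add_floor y
      rw [← h'] at this
      unfold Int.fract at h'
      linarith [h'.symm]
    exact (h.ne_int ⌊y⌋) hy

section Basic
variable {θ : ℝ} (hθ : Irrational θ)
include hθ

lemma irr_nat_mul {n : ℕ} (hn : n ≠ 0) : Irrational ((n : ℝ) * θ) :=
  hθ.natCast_mul hn

lemma fr_pos {x : ℕ} (hx : 0 < x) : 0 < fr θ x :=
  fract_pos_of_irr (irr_nat_mul hθ hx.ne')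

omit hθ in
lemma fr_lt_one (x : ℕ) : fr θ x < 1 := Int.fract_lt_one _

lemma vv_irr {x : ℕ} (hx : 0 < x) : Irrational (2 * (x : ℝ) * θ) := by
  have h := irr_nat_mul (θ := θ) hθ (n := 2 * x) (by omega)
  have h2 : ((2 * x : ℕ) : ℝ) * θ = 2 * (x : ℝ) * θ := by push_cast; ring
  rwa [h2] at h

lemma vv_pos {x : ℕ} (hx : 0 < x) : 0 < vv θ x := fract_pos_of_irr (vv_irr hθ hx)

omit hθ in
lemma vv_lt_one (x : ℕ) : vv θ x < 1 := Int.fract_lt_one _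

lemma fr_ne_half {x : ℕ} (hx : 0 < x) : fr θ x ≠ 1/2 := by
  intro h
  have h2 : Int.fract (2 * (x:ℝ) * θ) = 0 := by
    have hf : (x:ℝ) * θ = ⌊(x:ℝ)*θ⌋ + fr θ x := (Int.floor_add_fract _).symm
    have : 2 * (x:ℝ) * θ = (2 * ⌊(x:ℝ)*θ⌋ + 1 : ℤ) + 0 := by
      rw [h] at hf; push_cast; nlinarith [hf]
    rw [this, Int.fract_intCast_add, Int.fract_zero]
  exact (fract_pos_of_irr (vv_irr hθ hx)).ne' h2

end Basic

lemma fract_add_lt (a b : ℝ) (h : Int.fract a + Int.fract b < 1) :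
    Int.fract (a + b) = Int.fract a + Int.fract b := by
  rw [Int.fract_eq_iff]
  refine ⟨by linarith [Int.fract_nonneg a, Int.fract_nonneg b], h,
    ⟨⌊a⌋ + ⌊b⌋, by push_cast; unfold Int.fract; ring⟩⟩

lemma fract_add_ge (a b : ℝ) (h : 1 ≤ Int.fract a + Int.fract b) :
    Int.fract (a + b) = Int.fract a + Int.fract b - 1 := by
  rw [Int.fract_eq_iff]
  refine ⟨by linarith, by linarith [Int.fract_lt_one a, Int.fract_lt_one b],
    ⟨⌊a⌋ + ⌊b⌋ + 1, by push_cast; unfold Int.fract; ring⟩⟩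

section AddL
variable {θ : ℝ} (hθ : Irrational θ)
include hθ

lemma fr_lt_half {x : ℕ} (hx : 0 < x) (h : ¬ bit θ x) : fr θ x < 1/2 := by
  unfold bit at h
  push_neg at h
  exact lt_of_le_of_ne h (fr_ne_half hθ hx)

omit hθ in
lemma vv_add_lt' {x y : ℕ} (h : vv θ x + vv θ y < 1) : vv θ (x+y) = vv θ x + vv θ y := by
  unfold vv at *
  have hc : 2 * ((x:ℝ)+(y:ℝ)) * θ = 2*(x:ℝ)*θ + 2*(y:ℝ)*θ := by ring
  rw [show ((x+y:ℕ):ℝ) = (x:ℝ)+(y:ℝ) by push_cast; ring, hc, fract_add_lt _ _ h]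

omit hθ in
lemma vv_add_ge' {x y : ℕ} (h : 1 ≤ vv θ x + vv θ y) :
    vv θ (x+y) = vv θ x + vv θ y - 1 := by
  unfold vv at *
  have hc : 2 * ((x:ℝ)+(y:ℝ)) * θ = 2*(x:ℝ)*θ + 2*(y:ℝ)*θ := by ring
  rw [show ((x+y:ℕ):ℝ) = (x:ℝ)+(y:ℝ) by push_cast; ring, hc, fract_add_ge _ _ h]

lemma vv_add_ne_one {x y : ℕ} (hx : 0 < x) (hy : 0 < y) : vv θ x + vv θ y ≠ 1 := by
  intro h
  have h2 := vv_add_ge' (θ := θ) (x := x) (y := y) (le_of_eq h.symm)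
  rw [h] at h2
  have := vv_pos hθ (show 0 < x + y by omega)
  simp at h2; linarith

lemma vv_ne {x y : ℕ} (hx : 0 < x) (hy : 0 < y) (hxy : x ≠ y) : vv θ x ≠ vv θ y := by
  intro h
  unfold vv at h
  rcases Int.fract_eq_fract.mp h with ⟨z, hz⟩
  rcases Nat.lt_or_ge x y with hlt | hge
  · have : ((2*(y-x):ℕ):ℝ) * θ = (-z : ℤ) := by
      push_cast [Nat.cast_sub (le_of_lt hlt)]; linarith
    exact (hθ.natCast_mul (show 2*(y-x) ≠ 0 by omega)).ne_int (-z) this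
  · have hlt : y < x := by omega
    have : ((2*(x-y):ℕ):ℝ) * θ = (z : ℤ) := by
      push_cast [Nat.cast_sub (le_of_lt hlt)]; linarith
    exact (hθ.natCast_mul (show 2*(x-y) ≠ 0 by omega)).ne_int z this

omit hθ in
lemma vv_of_bit {x : ℕ} (hb : bit θ x) : vv θ x = 2 * fr θ x - 1 := by
  unfold vv
  have hd : 2 * (x:ℝ) * θ = ((2 * ⌊(x:ℝ)*θ⌋ : ℤ) : ℝ) + 2 * fr θ x := by
    unfold fr Int.fract; push_cast; ring
  rw [hd, Int.fract_intCast_add, Int.fract_eq_iff]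
  have h1 := hb
  unfold bit at h1
  have h2 : fr θ x < 1 := Int.fract_lt_one _
  exact ⟨by linarith, by linarith, ⟨1, by push_cast; ring⟩⟩

lemma vv_of_nbit {x : ℕ} (hx : 0 < x) (hnb : ¬ bit θ x) : vv θ x = 2 * fr θ x := by
  unfold vv
  have hd : 2 * (x:ℝ) * θ = ((2 * ⌊(x:ℝ)*θ⌋ : ℤ) : ℝ) + 2 * fr θ x := by
    unfold fr Int.fract; push_cast; ring
  rw [hd, Int.fract_intCast_add, Int.fract_eq_iff]
  have h1 := fr_lt_half hθ hx hnb
  have h2 : 0 ≤ fr θ x := Int.fract_nonneg _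
  exact ⟨by linarith, by linarith, ⟨0, by push_cast; ring⟩⟩

omit hθ in
lemma fr_add_lt' {x y : ℕ} (h : fr θ x + fr θ y < 1) : fr θ (x+y) = fr θ x + fr θ y := by
  unfold fr at *
  rw [show ((x+y:ℕ):ℝ)*θ = (x:ℝ)*θ + (y:ℝ)*θ by push_cast; ring, fract_add_lt _ _ h]

omit hθ in
lemma fr_add_ge' {x y : ℕ} (h : 1 ≤ fr θ x + fr θ y) : fr θ (x+y) = fr θ x + fr θ y - 1 := by
  unfold fr at *
  rw [show ((x+y:ℕ):ℝ)*θ = (x:ℝ)*θ + (y:ℝ)*θ by push_cast; ring, fract_add_ge _ _ h]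

end AddL

section Mirror
variable {θ : ℝ} (hθ : Irrational θ)
include hθ

lemma mirror_irr : Irrational (1 - θ) := by
  have h2 := hθ.neg.ratCast_add (q := 1)
  convert h2 using 1
  push_cast; ring

lemma fr_mirror {x : ℕ} (hx : 0 < x) : fr (1-θ) x = 1 - fr θ x := by
  have h0 : Int.fract ((x:ℝ)*θ) ≠ 0 := (fract_pos_of_irr (irr_nat_mul hθ hx.ne')).ne'
  unfold fr
  rw [show (x:ℝ)*(1-θ) = ((x:ℕ):ℤ) + (-((x:ℝ)*θ)) by push_cast; ring,
    Int.fract_intCast_add, Int.fract_neg h0]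

lemma vv_mirror {x : ℕ} (hx : 0 < x) : vv (1-θ) x = 1 - vv θ x := by
  have h0 : Int.fract (2*(x:ℝ)*θ) ≠ 0 := (vv_pos hθ hx).ne'
  unfold vv
  rw [show 2*(x:ℝ)*(1-θ) = ((2*x:ℕ):ℤ) + (-(2*(x:ℝ)*θ)) by push_cast; ring,
    Int.fract_intCast_add, Int.fract_neg h0]

lemma bit_mirror {x : ℕ} (hx : 0 < x) : bit (1-θ) x ↔ ¬ bit θ x := by
  unfold bit
  rw [fr_mirror hθ hx]
  have h1 := fr_ne_half hθ hx
  constructor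
  · intro h hb; linarith
  · intro h
    have := lt_of_le_of_ne (not_lt.mp h) h1
    linarith

lemma Sn_mirror {s : ℕ} : Sn (1-θ) s ↔ Sn θ s := by
  unfold Sn
  constructor
  · rintro ⟨hs, h⟩
    refine ⟨hs, fun x y hx hy hxy hsum => ?_⟩
    have := h x y hx hy hxy hsum
    rw [bit_mirror hθ hx, bit_mirror hθ hy] at this
    tauto
  · rintro ⟨hs, h⟩
    refine ⟨hs, fun x y hx hy hxy hsum => ?_⟩
    have := h x y hx hy hxy hsum
    rw [bit_mirror hθ hx, bit_mirror hθ hy]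
    tauto

lemma Edge_mirror {x y : ℕ} : Edge (1-θ) x y ↔ Edge θ x y := by
  unfold Edge
  rw [Sn_mirror hθ]

lemma Reach_mirror {x y : ℕ} (h : Reach (1-θ) x y) : Reach θ x y :=
  Relation.ReflTransGen.mono (fun a b hab => (Edge_mirror hθ).mp hab) _ _ h

lemma Champ_mirror {p q : ℕ} : Champ (1-θ) p q ↔ Champ θ q p := by
  unfold Champ
  constructor
  · rintro ⟨hp, hq, hord, hall⟩
    refine ⟨hq, hp, ?_, fun x hx hlt hxq hxp => ?_⟩
    · rcases hord with h | h
      · exact Or.inl h.symm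
      · rw [vv_mirror hθ hp, vv_mirror hθ hq] at h
        exact Or.inr (by linarith)
    · have := hall x hx (by omega) hxp hxq
      rw [vv_mirror hθ hp, vv_mirror hθ hq, vv_mirror hθ hx] at this
      constructor <;> linarith [this.1, this.2]
  · rintro ⟨hq, hp, hord, hall⟩
    refine ⟨hp, hq, ?_, fun x hx hlt hxp hxq => ?_⟩
    · rcases hord with h | h
      · exact Or.inl h.symm
      · rw [vv_mirror hθ hp, vv_mirror hθ hq]
        exact Or.inr (by linarith)
    · have := hall x hx (by omega) hxq hxp
      rw [vv_mirror hθ hp, vv_mirror hθ hq, vv_mirror hθ hx]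
      constructor <;> linarith [this.1, this.2]

lemma Good_mirror {p q : ℕ} : Good (1-θ) p q ↔ Good θ q p := by
  unfold Good
  constructor
  · rintro ⟨hch, hpq, hbp, hbq, hconn⟩
    have hp := ((Champ_mirror hθ).mp hch).2.1
    have hq := ((Champ_mirror hθ).mp hch).1
    have h1 := bit_mirror hθ hp
    have h2 := bit_mirror hθ hq
    refine ⟨(Champ_mirror hθ).mp hch, hpq.symm, by tauto, by tauto,
      fun z hz hlt => Reach_mirror hθ (hconn z hz (by omega))⟩
  · rintro ⟨hch, hpq, hbq, hbp, hconn⟩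
    have hq := hch.1
    have hp := hch.2.1
    have h1 := bit_mirror hθ hp
    have h2 := bit_mirror hθ hq
    refine ⟨(Champ_mirror hθ).mpr hch, hpq.symm, by tauto, by tauto,
      fun z hz hlt => ?_⟩
    exact Relation.ReflTransGen.mono (fun a b hab => (Edge_mirror hθ).mpr hab) _ _
      (hconn z hz (by omega))

end Mirror

section Memb
variable {θ : ℝ} (hθ : Irrational θ)
include hθ

omit hθ in
lemma Sn_two : Sn θ 2 :=
  ⟨by norm_num, fun x y hx hy hxy hsum => absurd hsum (by omega)⟩

lemma SMemPlus {s : ℕ} (hs : 0 < s) (h1 : fr θ s < 1/2)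
    (h2 : ∀ x, 0 < x → x < s → 2*x ≠ s → vv θ s < vv θ x) : Sn θ s := by
  have hnb : ¬ bit θ s := by unfold bit; push_neg; linarith
  have hvs := vv_of_nbit hθ hs hnb
  refine ⟨hs, fun x y hx hy hxy hsum => ⟨?_, ?_⟩⟩
  · rintro ⟨bx, b_y⟩
    have hbx := bx; have hby := b_y
    unfold bit at hbx hby
    have hfs : fr θ s = fr θ x + fr θ y - 1 := by
      rw [← hsum]; exact fr_add_ge' (by linarith)
    have hvx := vv_of_bit bx
    have h2x := h2 x hx (by omega) (by omega)
    rw [hvs, hvx, hfs] at h2x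
    linarith
  · rintro ⟨nbx, nby⟩
    have hfx := fr_lt_half hθ hx nbx
    have hfy := fr_lt_half hθ hy nby
    have hfs : fr θ s = fr θ x + fr θ y := by
      rw [← hsum]; exact fr_add_lt' (by linarith)
    have hvx := vv_of_nbit hθ hx nbx
    have h2x := h2 x hx (by omega) (by omega)
    rw [hvs, hvx, hfs] at h2x
    have := fr_pos hθ hy
    linarith

lemma SMemMinus {s : ℕ} (hs : 0 < s) (h1 : 1/2 < fr θ s)
    (h2 : ∀ x, 0 < x → x < s → 2*x ≠ s → vv θ x < vv θ s) : Sn θ s := by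
  rw [← Sn_mirror hθ]
  apply SMemPlus (mirror_irr hθ) hs
  · rw [fr_mirror hθ hs]; linarith
  · intro x hx hlt h2x
    rw [vv_mirror hθ hs, vv_mirror hθ hx]
    linarith [h2 x hx hlt h2x]

lemma bitAdd_10_A {p q : ℕ} (hp : 0 < p) (hq : 0 < q) (bp : bit θ p) (bq : ¬ bit θ q)
    (hA : 1 < vv θ p + vv θ q) : ¬ bit θ (p+q) := by
  have e1 := vv_of_bit (θ := θ) bp
  have e2 := vv_of_nbit hθ hq bq
  have hv1 := vv_lt_one (θ := θ) p
  have hv2 := vv_lt_one (θ := θ) q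
  have hge : fr θ (p+q) = fr θ p + fr θ q - 1 := fr_add_ge' (by linarith)
  unfold bit; push_neg
  rw [hge]; linarith

lemma bitAdd_00_A {p q : ℕ} (hp : 0 < p) (hq : 0 < q) (bp : ¬ bit θ p) (bq : ¬ bit θ q)
    (hA : 1 < vv θ p + vv θ q) : bit θ (p+q) := by
  have e1 := vv_of_nbit hθ hp bp
  have e2 := vv_of_nbit hθ hq bq
  have hv1 := vv_lt_one (θ := θ) p
  have hv2 := vv_lt_one (θ := θ) q
  have hlt : fr θ (p+q) = fr θ p + fr θ q := fr_add_lt' (by linarith)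
  unfold bit
  rw [hlt]; linarith

lemma bitAdd_00_B {p q : ℕ} (hp : 0 < p) (hq : 0 < q) (bp : ¬ bit θ p) (bq : ¬ bit θ q)
    (hB : vv θ p + vv θ q < 1) : ¬ bit θ (p+q) := by
  have e1 := vv_of_nbit hθ hp bp
  have e2 := vv_of_nbit hθ hq bq
  have hv1 := vv_pos hθ hp
  have hv2 := vv_pos hθ hq
  have hlt : fr θ (p+q) = fr θ p + fr θ q := fr_add_lt' (by linarith)
  unfold bit; push_neg
  rw [hlt]; linarith

end Memb

section ChampStep
variable {θ : ℝ} (hθ : Irrational θ)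
include hθ

lemma ChampStepB {p q : ℕ} (hch : Champ θ p q) (h : vv θ p + vv θ q < 1) :
    Champ θ p (p+q) ∧ vv θ (p+q) = vv θ p + vv θ q := by
  obtain ⟨hp, hq, hord, hall⟩ := hch
  have hvr := vv_add_lt' (θ := θ) (x := p) (y := q) h
  have hvp := vv_pos hθ hp
  have hvq := vv_pos hθ hq
  refine ⟨⟨hp, by omega, Or.inr (by linarith), fun x hx hlt hxp hxr => ?_⟩, hvr⟩
  rw [hvr]
  rcases Nat.lt_trichotomy x (p+q) with hc | hc | hc
  · by_cases hxq : x = q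
    · subst hxq
      have hstrict : vv θ p < vv θ x := by
        rcases hord with he | he
        · exact absurd he.symm hxp
        · exact he
      exact ⟨hstrict, by linarith⟩
    · have := hall x hx hc hxp hxq
      exact ⟨this.1, by linarith [this.2]⟩
  · exact absurd hc hxr
  · have hpx : p < x := by omega
    have hxy : x = p + (x - p) := by omega
    set y := x - p with hydef
    have hy0 : 0 < y := by omega
    have hyq : q < y := by omega
    have hylt : y < p + q := by omega
    by_cases hyp : y = p
    · have hpq' : p ≠ q := by
        intro he; apply hxr; omega
      have hstrict : vv θ p < vv θ q := hord.resolve_left hpq'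
      have hvv : vv θ x = vv θ p + vv θ p := by
        rw [hxy, hyp]; exact vv_add_lt' (by linarith)
      rw [hvv]
      exact ⟨by linarith, by linarith⟩
    · have hh := hall y hy0 hylt hyp (by omega)
      have hvv : vv θ x = vv θ p + vv θ y := by
        rw [hxy]; exact vv_add_lt' (by linarith [hh.2])
      rw [hvv]
      exact ⟨by linarith [hh.1], by linarith [hh.2]⟩

lemma ChampStepA {p q : ℕ} (hch : Champ θ p q) (h : 1 < vv θ p + vv θ q) :
    Champ θ (p+q) q ∧ vv θ (p+q) = vv θ p + vv θ q - 1 := by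
  have hp := hch.1
  have hq := hch.2.1
  have hm : Champ (1-θ) q p := (Champ_mirror hθ).mpr hch
  have hsum : vv (1-θ) q + vv (1-θ) p < 1 := by
    rw [vv_mirror hθ hq, vv_mirror hθ hp]; linarith
  obtain ⟨hch', hval⟩ := ChampStepB (mirror_irr hθ) hm hsum
  have hqp : q + p = p + q := by omega
  rw [hqp] at hch' hval
  constructor
  · exact (Champ_mirror hθ).mp hch'
  · rw [vv_mirror hθ (show 0 < p + q by omega), vv_mirror hθ hq, vv_mirror hθ hp] at hval
    linarith

end ChampStep

section L3
variable {θ : ℝ} (hθ : Irrational θ)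
include hθ

lemma L3a {p q : ℕ} (hch : Champ θ p q) (hpq : p ≠ q)
    (hsum : vv θ p + vv θ q < 1) (hNH : 2 * vv θ p < vv θ q) : Sn θ (2*p) := by
  obtain ⟨hp, hq, hord, hall⟩ := hch
  have hstrict : vv θ p < vv θ q := hord.resolve_left hpq
  have hvp := vv_pos hθ hp
  have hvq := vv_pos hθ hq
  have hvp1 := vv_lt_one (θ := θ) p
  have hvq1 := vv_lt_one (θ := θ) q
  have key : ∀ x, 0 < x → x < 2*p → x ≠ p → 2 * vv θ p < vv θ x := by
    intro x hx hlt hxp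
    by_contra hcon
    push_neg at hcon
    rcases eq_or_ne x q with hxq | hxq
    · rw [hxq] at hcon; linarith
    rcases eq_or_ne x (p+q) with hxpq | hxpq
    · rw [hxpq, vv_add_lt' hsum] at hcon; linarith
    rcases Nat.lt_trichotomy x p with hc | hc | hc
    · have hx1 := hall x hx (by omega) hxp hxq
      have hw0 : 0 < p - x := by omega
      have hident : (p - x) + x = p := by omega
      rcases le_or_gt 1 (vv θ (p-x) + vv θ x) with hcw | hcw
      · have hval := vv_add_ge' (θ := θ) hcw
        rw [hident] at hval
        by_cases hwq : p - x = q
        · rw [hwq] at hval; linarith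
        · have hwchamp := hall (p-x) hw0 (by omega) (by omega) hwq
          linarith [hwchamp.2]
      · have hval := vv_add_lt' (θ := θ) hcw
        rw [hident] at hval
        have := vv_pos hθ hw0
        linarith [hx1.1]
    · exact absurd hc hxp
    · have hy0 : 0 < x - p := by omega
      have hident : x = p + (x - p) := by omega
      have hyq : x - p ≠ q := fun h => hxpq (by omega)
      have hyp : x - p ≠ p := fun h => (by omega : x ≠ 2*p) (by omega)
      have hych := hall (x-p) hy0 (by omega) hyp hyq
      rcases le_or_gt 1 (vv θ p + vv θ (x-p)) with hcy | hcy
      · have hval := vv_add_ge' (θ := θ) hcy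
        rw [← hident] at hval
        have := vv_pos hθ hx
        linarith [hych.2]
      · have hval := vv_add_lt' (θ := θ) hcy
        rw [← hident] at hval
        linarith [hych.1]
  have hfr2p : fr θ (2*p) = vv θ p := by
    unfold fr vv; congr 1; push_cast; ring
  have hvv2p : vv θ (2*p) = 2 * vv θ p := by
    rw [show 2*p = p + p by omega, vv_add_lt' (by linarith)]; ring
  apply SMemPlus hθ (by omega) (by rw [hfr2p]; linarith)
  intro x hx hlt h2x
  rw [hvv2p]
  exact key x hx hlt (by omega)

lemma L3b {p q : ℕ} (hch : Champ θ p q) (hpq : p ≠ q)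
    (hsum : 1 < vv θ p + vv θ q) (hNH : vv θ p < 2 * vv θ q - 1) : Sn θ (2*q) := by
  have hp := hch.1
  have hq := hch.2.1
  rw [← Sn_mirror hθ]
  apply L3a (mirror_irr hθ) ((Champ_mirror hθ).mpr hch) (Ne.symm hpq)
  · rw [vv_mirror hθ hq, vv_mirror hθ hp]; linarith
  · rw [vv_mirror hθ hq, vv_mirror hθ hp]; linarith

lemma SnHatA {p q : ℕ} (hch : Champ θ p q) (hpq : p ≠ q) (bp : bit θ p)
    (bq : ¬ bit θ q) (hA : 1 < vv θ p + vv θ q) : Sn θ (p+q) := by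
  obtain ⟨hp, hq, hord, hall⟩ := hch
  have hvp := vv_pos hθ hp
  have hvq := vv_pos hθ hq
  have hvp1 := vv_lt_one (θ := θ) p
  have hvq1 := vv_lt_one (θ := θ) q
  have e1 := vv_of_bit (θ := θ) bp
  have e2 := vv_of_nbit hθ hq bq
  have hfr : fr θ (p+q) = fr θ p + fr θ q - 1 := fr_add_ge' (by linarith)
  have hvv : vv θ (p+q) = vv θ p + vv θ q - 1 := vv_add_ge' (by linarith)
  apply SMemPlus hθ (by omega) (by rw [hfr]; linarith)
  intro x hx hlt _
  rw [hvv]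
  rcases eq_or_ne x p with h | h
  · rw [h]; linarith
  rcases eq_or_ne x q with h' | h'
  · rw [h']; linarith
  · linarith [(hall x hx hlt h h').1]

lemma SnHatB {p q : ℕ} (hch : Champ θ p q) (hpq : p ≠ q) (bp : bit θ p)
    (bq : ¬ bit θ q) (hB : vv θ p + vv θ q < 1) : Sn θ (p+q) := by
  have hp := hch.1
  have hq := hch.2.1
  rw [← Sn_mirror hθ, show p + q = q + p by omega]
  apply SnHatA (mirror_irr hθ) ((Champ_mirror hθ).mpr hch) (Ne.symm hpq)
  · exact (bit_mirror hθ hq).mpr bq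
  · have := (bit_mirror hθ hp)
    tauto
  · rw [vv_mirror hθ hq, vv_mirror hθ hp]; linarith

end L3

section Machine
variable {θ : ℝ} (hθ : Irrational θ)
include hθ

lemma Loop : ∀ (k : ℕ) (P Q : ℕ), Champ θ P Q → ¬ bit θ P → ¬ bit θ Q →
    1 - vv θ Q < (k : ℝ) * vv θ P →
    ∃ Q', (∃ j, Q' = Q + j * P) ∧ Champ θ P Q' ∧ ¬ bit θ Q' ∧ 1 < vv θ P + vv θ Q' := by
  intro k
  induction k with
  | zero =>
    intro P Q hch _ _ hk
    have := vv_lt_one (θ := θ) Q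
    norm_num at hk
    linarith
  | succ k ih =>
    intro P Q hch hbP hbQ hk
    rcases lt_or_gt_of_ne (vv_add_ne_one hθ hch.1 hch.2.1) with hB | hA
    · obtain ⟨hch', hval⟩ := ChampStepB hθ hch hB
      have hbQ' : ¬ bit θ (P+Q) := bitAdd_00_B hθ hch.1 hch.2.1 hbP hbQ hB
      have hvP := vv_pos hθ hch.1
      have hk' : 1 - vv θ (P+Q) < (k : ℝ) * vv θ P := by
        rw [hval]; push_cast at hk ⊢; nlinarith
      obtain ⟨Q', ⟨j, hj⟩, h1, h2, h3⟩ := ih P (P+Q) hch' hbP hbQ' hk'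
      exact ⟨Q', ⟨j+1, by rw [hj]; ring⟩, h1, h2, h3⟩
    · exact ⟨Q, ⟨0, by omega⟩, hch, hbQ, hA⟩

lemma MakePre {P Q : ℕ} (hch : Champ θ P Q) (hbP : ¬ bit θ P) (hbQ : ¬ bit θ Q)
    (hA : 1 < vv θ P + vv θ Q) (hPQ : P = Q → Q = 1) :
    Champ θ (P+Q) Q ∧ bit θ (P+Q) ∧ P + Q ≠ Q ∧
    Sn θ (P+Q+Q) ∧
    ((Sn θ (2*(P+Q)) ∧ vv θ (P+Q) + vv θ Q < 1) ∨
     (Sn θ (2*Q) ∧ 1 < vv θ (P+Q) + vv θ Q)) := by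
  obtain ⟨hch', hval⟩ := ChampStepA hθ hch hA
  have hp' : 0 < P + Q := by have := hch.1; omega
  have hbit' : bit θ (P+Q) := bitAdd_00_A hθ hch.1 hch.2.1 hbP hbQ hA
  have hne : P + Q ≠ Q := by have := hch.1; omega
  have hvP := vv_pos hθ hch.1
  have hvQ := vv_pos hθ hch.2.1
  have hvP1 := vv_lt_one (θ := θ) P
  have hvQ1 := vv_lt_one (θ := θ) Q
  have hordPQ : vv θ P ≤ vv θ Q := by
    rcases hch.2.2.1 with h | h
    · rw [h]
    · linarith
  refine ⟨hch', hbit', hne, ?_, ?_⟩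
  · rcases lt_or_gt_of_ne (vv_add_ne_one hθ hp' hch.2.1) with hB' | hA'
    · exact SnHatB hθ hch' hne hbit' hbQ hB'
    · exact SnHatA hθ hch' hne hbit' hbQ hA'
  · rcases lt_or_gt_of_ne (vv_add_ne_one hθ hp' hch.2.1) with hB' | hA'
    · left
      refine ⟨L3a hθ hch' hne hB' ?_, hB'⟩
      rw [hval] at hB' ⊢
      linarith
    · right
      refine ⟨?_, hA'⟩
      by_cases hQ1 : Q = 1
      · rw [hQ1]
        exact Sn_two
      · have hPQ' : P ≠ Q := fun h => hQ1 (hPQ h)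
        have hstrict : vv θ P < vv θ Q := hch.2.2.1.resolve_left hPQ'
        apply L3b hθ hch' hne hA'
        rw [hval]; linarith

end Machine

section Graph
variable {θ : ℝ}

lemma Edge_symm {x y : ℕ} (h : Edge θ x y) : Edge θ y x :=
  ⟨h.2.1, h.1, h.2.2.1.symm, by rw [Nat.add_comm]; exact h.2.2.2⟩

lemma Reach_symm {x y : ℕ} (h : Reach θ x y) : Reach θ y x := by
  induction h with
  | refl => exact .refl
  | tail _ hbc ih => exact Relation.ReflTransGen.head (Edge_symm hbc) ih

lemma StepDown {s1 d z : ℕ} (h1 : Sn θ s1) (h2 : Sn θ (s1+d)) (hd : 0 < d)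
    (hz1 : d < z) (hz2 : z ≤ s1) : Reach θ z (z - d) := by
  by_cases hc1 : 2*z = s1 + d
  · apply Relation.ReflTransGen.single
    exact ⟨by omega, by omega, by omega, by rw [show z + (z-d) = s1 by omega]; exact h1⟩
  by_cases hc2 : 2*z = s1 + 2*d
  · apply Relation.ReflTransGen.single
    exact ⟨by omega, by omega, by omega, by rw [show z + (z-d) = s1 + d by omega]; exact h2⟩
  · have e1 : Edge θ z (s1 + d - z) :=
      ⟨by omega, by omega, by omega, by rw [show z + (s1+d-z) = s1+d by omega]; exact h2⟩
    have e2 : Edge θ (s1 + d - z) (z - d) :=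
      ⟨by omega, by omega, by omega, by rw [show (s1+d-z) + (z-d) = s1 by omega]; exact h1⟩
    exact Relation.ReflTransGen.head e1 (Relation.ReflTransGen.single e2)

lemma IterDown {s1 d : ℕ} (h1 : Sn θ s1) (h2 : Sn θ (s1+d)) (hd : 0 < d) :
    ∀ z, 0 < z → z ≤ s1 → ∃ w, Reach θ z w ∧ 0 < w ∧ w ≤ d ∧ w % d = z % d := by
  intro z
  induction z using Nat.strong_induction_on with
  | _ z ih =>
    intro hz hzs
    by_cases hc : z ≤ d
    · exact ⟨z, .refl, hz, hc, rfl⟩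
    · have hR := StepDown h1 h2 hd (by omega) hzs
      obtain ⟨w, hw1, hw2, hw3, hw4⟩ := ih (z-d) (by omega) (by omega) (by omega)
      refine ⟨w, hR.trans hw1, hw2, hw3, ?_⟩
      rw [hw4]
      conv_rhs => rw [show z = (z-d) + d by omega]
      rw [Nat.add_mod_right]

lemma ConnExtend {d n' : ℕ} (hd : 0 < d) (hdn : d < n')
    (hold : ∀ w, 0 < w → w < d → Reach θ 1 w)
    (hSn' : Sn θ n')
    (hpair : (Sn θ n' ∧ Sn θ (n'+d)) ∨ (Sn θ (n'-d) ∧ Sn θ n'))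
    (ha : d = 1 ∨ ¬ (d ∣ (n' - d))) :
    ∀ z, 0 < z → z < n' → Reach θ 1 z := by
  obtain ⟨s1, hs1a, hs1b, hS1, hS2⟩ :
      ∃ s1, n' - d ≤ s1 ∧ s1 ≤ n' ∧ Sn θ s1 ∧ Sn θ (s1 + d) := by
    rcases hpair with ⟨u1, u2⟩ | ⟨u1, u2⟩
    · exact ⟨n', by omega, le_refl _, u1, u2⟩
    · refine ⟨n' - d, le_refl _, by omega, u1, ?_⟩
      rw [show n' - d + d = n' by omega]
      exact u2
  have orphan : Reach θ 1 d := by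
    rcases ha with h1 | hnd
    · rw [h1]
      exact Relation.ReflTransGen.refl
    · have ha0 : 0 < n' - d := by omega
      have hne : d ≠ n' - d := fun h => hnd ⟨1, by omega⟩
      have e : Edge θ d (n'-d) := ⟨hd, ha0, hne, by rw [show d + (n'-d) = n' by omega]; exact hSn'⟩
      obtain ⟨w, hw1, hw2, hw3, hw4⟩ := IterDown hS1 hS2 hd (n'-d) ha0 (by omega)
      have hwd : w ≠ d := by
        intro h
        rw [h, Nat.mod_self] at hw4
        exact hnd (Nat.dvd_of_mod_eq_zero hw4.symm)
      exact ((hold w hw2 (by omega)).trans (Reach_symm hw1)).trans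
        (Relation.ReflTransGen.single (Edge_symm e))
  intro z hz hzn
  rcases le_or_gt z d with hc | hc
  · rcases eq_or_lt_of_le hc with h | h
    · rw [h]; exact orphan
    · exact hold z hz h
  · rcases le_or_gt z s1 with hc2 | hc2
    · obtain ⟨w, hw1, hw2, hw3, hw4⟩ := IterDown hS1 hS2 hd z hz hc2
      have hRw : Reach θ 1 w := by
        rcases eq_or_lt_of_le hw3 with h | h
        · rw [h]; exact orphan
        · exact hold w hw2 h
      exact hRw.trans (Reach_symm hw1)
    · have hy0 : 0 < n' - z := by omega
      have hylt : n' - z < d := by omega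
      have hne : (n' - z) ≠ z := by omega
      have e : Edge θ (n'-z) z := ⟨hy0, hz, hne, by rw [show (n'-z) + z = n' by omega]; exact hSn'⟩
      exact (hold (n'-z) hy0 hylt).trans (Relation.ReflTransGen.single e)

end Graph

section Build
variable {θ : ℝ} (hθ : Irrational θ)
include hθ

lemma BuildGood {P Q0 : ℕ} (hch : Champ θ P Q0) (hbP : ¬ bit θ P) (hbQ : ¬ bit θ Q0)
    (hold : ∀ w, 0 < w → w < P → Reach θ 1 w)
    (hmod : ∀ Q', (∃ j, Q' = Q0 + j * P) → (P = 1 ∨ (¬ (P ∣ 2*Q') ∧ P ≠ Q'))) :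
    ∃ p' q', Good θ p' q' ∧ P < p' + q' := by
  have hvP := vv_pos hθ hch.1
  obtain ⟨k, hk⟩ := exists_nat_gt ((1 - vv θ Q0) / vv θ P)
  have hk' : 1 - vv θ Q0 < (k : ℝ) * vv θ P := by
    rw [div_lt_iff₀ hvP] at hk; linarith
  obtain ⟨Q, hjQ, hchQ, hbQ', hexit⟩ := Loop hθ k P Q0 hch hbP hbQ hk'
  have hmodQ := hmod Q hjQ
  have hPQ1 : P = Q → Q = 1 := by
    rcases hmodQ with h | ⟨_, h2⟩
    · intro hh; omega
    · intro hh; exact absurd hh h2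
  obtain ⟨hch', hbit', hne', hSnhat, hdbl⟩ := MakePre hθ hchQ hbP hbQ' hexit hPQ1
  have hQpos : 0 < Q := hchQ.2.1
  have hPpos : 0 < P := hch.1
  have hdn : P < P + Q + Q := by omega
  have hanot : P = 1 ∨ ¬ (P ∣ (P + Q + Q - P)) := by
    rcases hmodQ with h | ⟨h2, _⟩
    · exact Or.inl h
    · right
      rw [show P + Q + Q - P = 2*Q by omega]
      exact h2
  have hpair : (Sn θ (P+Q+Q) ∧ Sn θ ((P+Q+Q)+P)) ∨
      (Sn θ ((P+Q+Q)-P) ∧ Sn θ (P+Q+Q)) := by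
    rcases hdbl with ⟨hs, _⟩ | ⟨hs, _⟩
    · left
      exact ⟨hSnhat, by rw [show (P+Q+Q)+P = 2*(P+Q) by omega]; exact hs⟩
    · right
      exact ⟨by rw [show (P+Q+Q)-P = 2*Q by omega]; exact hs, hSnhat⟩
  have hconn := ConnExtend hPpos hdn hold hSnhat hpair hanot
  exact ⟨P+Q, Q, ⟨hch', hne', hbit', hbQ',
    fun z hz hlt => hconn z hz (by omega)⟩, by omega⟩

lemma GoodStepA {p q : ℕ} (hg : Good θ p q) (hA : 1 < vv θ p + vv θ q) :
    ∃ p' q', Good θ p' q' ∧ p + q < p' + q' := by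
  obtain ⟨hch, hpq, hbp, hbq, hconn⟩ := hg
  obtain ⟨hch1, hval1⟩ := ChampStepA hθ hch hA
  have hb1 : ¬ bit θ (p+q) := bitAdd_10_A hθ hch.1 hch.2.1 hbp hbq hA
  apply BuildGood hθ hch1 hb1 hbq hconn
  rintro Q' ⟨j, hj⟩
  right
  have hp0 := hch.1
  have hq0 := hch.2.1
  constructor
  · rintro ⟨c, hc⟩
    have h2Q : 2*Q' = 2*q + 2*j*(p+q) := by rw [hj]; ring
    have hdv2 : (p+q) ∣ 2*j*(p+q) := Dvd.intro (2*j) (by ring)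
    have hq2 : (p+q) ∣ 2*q := by
      have hx := Nat.dvd_sub (Dvd.intro c hc.symm) hdv2
      rwa [show 2*Q' - 2*j*(p+q) = 2*q by rw [h2Q]; exact Nat.add_sub_cancel _ _] at hx
    rcases hq2 with ⟨c', hc'⟩
    rcases Nat.lt_or_ge c' 2 with hlt | hge
    · interval_cases c' <;> omega
    · have : (p+q)*2 ≤ (p+q)*c' := Nat.mul_le_mul_left _ hge
      omega
  · intro h
    rcases j with _ | j
    · simp at hj; omega
    · have hX : (j+1)*(p+q) ≥ p+q := Nat.le_mul_of_pos_left _ (by omega)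
      have : Q' = q + (j+1)*(p+q) := hj
      omega

lemma GoodStep {p q : ℕ} (hg : Good θ p q) :
    ∃ p' q', Good θ p' q' ∧ p + q < p' + q' := by
  rcases lt_or_gt_of_ne (vv_add_ne_one hθ hg.1.1 hg.1.2.1) with hB | hA
  · have hg' : Good (1-θ) q p := (Good_mirror hθ).mpr hg
    have hsum' : 1 < vv (1-θ) q + vv (1-θ) p := by
      rw [vv_mirror hθ hg.1.2.1, vv_mirror hθ hg.1.1]; linarith
    obtain ⟨p', q', hg'', hgt⟩ := GoodStepA (mirror_irr hθ) hg' hsum'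
    exact ⟨q', p', (Good_mirror hθ).mp hg'', by omega⟩
  · exact GoodStepA hθ hg hA

omit hθ in
lemma Champ11 : Champ θ 1 1 :=
  ⟨one_pos, one_pos, Or.inl rfl, fun x hx hlt hxp hxq => by omega⟩

lemma GoodBaseAux (hb1 : ¬ bit θ 1) : ∃ p q, Good θ p q := by
  obtain ⟨p', q', hg, _⟩ := BuildGood hθ Champ11 hb1 hb1
    (fun w hw hlt => absurd hlt (by omega)) (fun Q' _ => Or.inl rfl)
  exact ⟨p', q', hg⟩

lemma GoodBase : ∃ p q, Good θ p q := by
  by_cases hb1 : bit θ 1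
  · have hb1' : ¬ bit (1-θ) 1 := by
      have := bit_mirror hθ one_pos; tauto
    obtain ⟨p, q, hg⟩ := GoodBaseAux (mirror_irr hθ) hb1'
    exact ⟨q, p, (Good_mirror hθ).mp hg⟩
  · exact GoodBaseAux hθ hb1

lemma goodAbove : ∀ N, ∃ p q, Good θ p q ∧ N < p + q := by
  intro N
  induction N with
  | zero =>
    obtain ⟨p, q, hg⟩ := GoodBase hθ
    exact ⟨p, q, hg, by have := hg.1.1; omega⟩
  | succ N ih =>
    obtain ⟨p, q, hg, hN⟩ := ih
    rcases Nat.lt_or_ge (N+1) (p+q) with h | h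
    · exact ⟨p, q, hg, h⟩
    · obtain ⟨p', q', hg', hgt⟩ := GoodStep hθ hg
      exact ⟨p', q', hg', by omega⟩

lemma connAll {z : ℕ} (hz : 0 < z) : Reach θ 1 z := by
  obtain ⟨p, q, hg, hN⟩ := goodAbove hθ z
  exact hg.2.2.2.2 z hz hN

end Build

end
end UA



/-- `A_α` as a set of positive integers. -/
noncomputable def AsetP (α : ℝ) : Set ℕ+ := {n | E α (n : ℕ) < 0}

/-- `S_α` as a set of positive integers: sums avoided by `{A_α, B_α}`. -/
noncomputable def SsetP (α : ℝ) : Set ℕ+ :=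
  {s | (∀ x ∈ AsetP α, ∀ y ∈ AsetP α, x ≠ y → x + y ≠ s) ∧
       (∀ x ∉ AsetP α, ∀ y ∉ AsetP α, x ≠ y → x + y ≠ s)}

namespace UA
section Final
variable {α : ℝ} (hα : 1 < α) (hirr : Irrational α)

lemma E_sign {n : ℕ} (hn : 0 < n) (hα : 1 < α) (hirr : Irrational α) :
    (E α n < 0 ↔ bit α⁻¹ n) ∧ (0 < E α n ↔ ¬ bit α⁻¹ n) := by
  have hα0 : (0:ℝ) < α := by linarith
  have hθ : Irrational α⁻¹ := hirr.inv
  set x : ℝ := (n:ℝ) * α⁻¹ with hx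
  have hdiv : (n:ℝ) / α = x := div_eq_mul_inv _ _
  have hax : α * x = (n:ℝ) := by
    rw [hx]; field_simp
  have hE : E α n = α * (x - round x) := by
    unfold E
    rw [hdiv, ← hax]
    ring
  have hf0 : 0 < Int.fract x := fract_pos_of_irr (irr_nat_mul hθ hn.ne')
  have hfh : Int.fract x ≠ 1/2 := fr_ne_half hθ hn
  have hfl : Int.fract x < 1 := Int.fract_lt_one x
  have hfloor : x = ⌊x⌋ + Int.fract x := (Int.floor_add_fract x).symm
  have hb : bit α⁻¹ n ↔ 1/2 < Int.fract x := Iff.rfl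
  by_cases hbit : bit α⁻¹ n
  · have hfr : 1/2 < Int.fract x := hb.mp hbit
    have hround : (⌊x⌋ + 1 : ℤ) ≤ round x := by
      rw [round_eq]
      apply Int.le_floor.mpr
      push_cast
      linarith
    have hlt : x < round x := by
      have : (⌊x⌋:ℝ) + 1 ≤ (round x : ℝ) := by exact_mod_cast hround
      linarith
    have hEneg : E α n < 0 := by rw [hE]; nlinarith
    exact ⟨⟨fun _ => hbit, fun _ => hEneg⟩, ⟨fun h => absurd hEneg (by linarith), fun h => absurd hbit h⟩⟩
  · have hfr : Int.fract x < 1/2 := lt_of_le_of_ne (not_lt.mp hbit) hfh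
    have hround : round x ≤ ⌊x⌋ := by
      rw [round_eq]
      have h2 : (⌊x + 1/2⌋ : ℤ) < ⌊x⌋ + 1 := Int.floor_lt.mpr (by push_cast; linarith)
      omega
    have hgt : (round x : ℝ) < x := by
      have h1 : (round x : ℝ) ≤ ⌊x⌋ := by exact_mod_cast hround
      linarith
    have hEpos : 0 < E α n := by rw [hE]; nlinarith
    exact ⟨⟨fun h => absurd h (by linarith), fun h => absurd h hbit⟩,
      ⟨fun _ => hbit, fun _ => hEpos⟩⟩

lemma AsetP_bit (hα : 1 < α) (hirr : Irrational α) (x : ℕ+) :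
    x ∈ AsetP α ↔ bit α⁻¹ (x : ℕ) := by
  have := E_sign (α := α) x.pos hα hirr
  exact this.1

lemma AsetP_nbit (hα : 1 < α) (hirr : Irrational α) (x : ℕ+) :
    x ∉ AsetP α ↔ ¬ bit α⁻¹ (x : ℕ) := by
  rw [AsetP_bit hα hirr]

lemma Sn_to_SsetP (hα : 1 < α) (hirr : Irrational α) (s : ℕ+)
    (hs : Sn α⁻¹ (s : ℕ)) : s ∈ SsetP α := by
  constructor
  · intro x hx y hy hxy heq
    have hsum : (x:ℕ) + (y:ℕ) = (s:ℕ) := by rw [← heq]; rfl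
    have h := (hs.2 (x:ℕ) (y:ℕ) x.pos y.pos
      (fun hc => hxy (PNat.coe_injective hc)) hsum).1
    exact h ⟨(AsetP_bit hα hirr x).mp hx, (AsetP_bit hα hirr y).mp hy⟩
  · intro x hx y hy hxy heq
    have hsum : (x:ℕ) + (y:ℕ) = (s:ℕ) := by rw [← heq]; rfl
    have h := (hs.2 (x:ℕ) (y:ℕ) x.pos y.pos
      (fun hc => hxy (PNat.coe_injective hc)) hsum).2
    exact h ⟨(AsetP_nbit hα hirr x).mp hx, (AsetP_nbit hα hirr y).mp hy⟩

end Final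
end UA

/-- `S_α` is uniquely avoidable: `{A_α, B_α}` is the only avoiding partition. -/
theorem stmt18 (α : ℝ) (hα : 1 < α) (hirr : Irrational α) :
    Avoids (AsetP α) (SsetP α) ∧
      ∀ A', Avoids A' (SsetP α) → A' = AsetP α ∨ A' = (AsetP α)ᶜ := by
  have hθ : Irrational α⁻¹ := hirr.inv
  set θ := α⁻¹ with hθdef
  constructor
  · constructor
    · intro x hx y hy hxy hmem
      exact hmem.1 x hx y hy hxy rfl
    · intro x hx y hy hxy hmem
      exact hmem.2 x hx y hy hxy rfl
  · intro A' hA'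
    -- agreement predicate
    set agree : ℕ+ → Prop := fun z => (z ∈ A' ↔ z ∈ AsetP α) with hagree
    have edge_agree : ∀ a b : ℕ, UA.Edge θ a b →
        ∀ (ha : 0 < a) (hb : 0 < b), (agree ⟨a, ha⟩ ↔ agree ⟨b, hb⟩) := by
      intro a b he ha hb
      set X : ℕ+ := ⟨a, ha⟩
      set Y : ℕ+ := ⟨b, hb⟩
      have hXY : X ≠ Y := by
        intro h
        exact he.2.2.1 (congrArg (fun (t:ℕ+) => (t:ℕ)) h)
      have hSmem : X + Y ∈ SsetP α := UA.Sn_to_SsetP hα hirr (X+Y) he.2.2.2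
      have h1 : ¬ (X ∈ A' ∧ Y ∈ A') := by
        rintro ⟨u, v⟩
        exact hA'.1 X u Y v hXY hSmem
      have h2 : ¬ (X ∉ A' ∧ Y ∉ A') := by
        rintro ⟨u, v⟩
        exact hA'.2 X u Y v hXY hSmem
      have h3 : ¬ (X ∈ AsetP α ∧ Y ∈ AsetP α) := fun ⟨u, v⟩ =>
        hSmem.1 X u Y v hXY rfl
      have h4 : ¬ (X ∉ AsetP α ∧ Y ∉ AsetP α) := fun ⟨u, v⟩ =>
        hSmem.2 X u Y v hXY rfl
      simp only [hagree]
      tauto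
    have reach_agree : ∀ b : ℕ, UA.Reach θ 1 b → ∀ (hb : 0 < b),
        (agree 1 ↔ agree ⟨b, hb⟩) := by
      intro b hr
      induction hr with
      | refl => intro hb; rfl
      | tail hr' he ih =>
        intro hb
        have hc := he.1
        exact (ih hc).trans (edge_agree _ _ he hc hb)
    have hall : ∀ z : ℕ+, (agree 1 ↔ agree z) := by
      intro z
      have := reach_agree (z:ℕ) (UA.connAll hθ z.pos) z.pos
      convert this using 2
      exact Iff.rfl
    by_cases h1 : agree 1
    · left
      ext z
      have := (hall z).mp h1
      exact this
    · right
      ext z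
      have hz := hall z
      simp only [Set.mem_compl_iff]
      simp only [hagree] at hz h1 ⊢
      tauto
end

section
/- Let s_1, s_2 be coprime positive integers and define s_n = s_{n-1} + s_{n-2} for n ≥ 3. The set {s_n : n ≥ 1} is uniquely avoidable if s_1 < s_2 or at least one of s_1, s_2 is even; if s_1 > s_2 and both are odd, the set is not avoidable. -/
set_option linter.unusedVariables false

namespace Stmt19

def EdgeN (a b u v : ℕ) : Prop :=
  u ≠ v ∧ 1 ≤ u ∧ 1 ≤ v ∧ (u + v = a ∨ u + v = b ∨ u + v = a + b ∨ u + v = a + 2*b)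

def LinkN (a b x y : ℕ) : Prop :=
  ∀ P Q : ℕ → Prop, (∀ u v, EdgeN a b u v → (P u ↔ ¬ P v)) →
    (∀ u v, EdgeN a b u v → (Q u ↔ ¬ Q v)) → ((P x ↔ P y) ↔ (Q x ↔ Q y))

lemma LinkN.refl (a b x : ℕ) : LinkN a b x x := fun _ _ _ _ => by tauto

lemma LinkN.of_edge {a b x y : ℕ} (h : EdgeN a b x y) : LinkN a b x y := by
  intro P Q hP hQ
  have h1 := hP _ _ h
  have h2 := hQ _ _ h
  tauto

lemma LinkN.trans {a b x y z : ℕ} (h1 : LinkN a b x y) (h2 : LinkN a b y z) :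
    LinkN a b x z := by
  intro P Q hP hQ
  have := h1 P Q hP hQ
  have := h2 P Q hP hQ
  tauto

lemma LinkN.symm {a b x y : ℕ} (h : LinkN a b x y) : LinkN a b y x := by
  intro P Q hP hQ
  have := h P Q hP hQ
  tauto

section Routes
variable {a b : ℕ}

/-- going up by `b` -/
lemma link_up (ha : 1 ≤ a) (hb : 1 ≤ b) (hne : a ≠ b) {v : ℕ} (hv1 : 1 ≤ v) (hva : v ≤ a)
    (hmid : 2*v ≠ a) : LinkN a b v (v + b) := by
  by_cases h1 : v < a ∧ 2*v + b ≠ a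
  · -- v → a - v → v + b
    refine LinkN.trans (y := a - v) (LinkN.of_edge ?_) (LinkN.of_edge ?_)
    · exact ⟨by omega, hv1, by omega, Or.inl (by omega)⟩
    · exact ⟨by omega, by omega, by omega, Or.inr <| Or.inr <| Or.inl (by omega)⟩
  · -- v → a + b - v → v + b
    have hcase : v = a ∨ 2*v + b = a := by omega
    have hvab : 2*v ≠ a + b := by omega
    refine LinkN.trans (y := a + b - v) (LinkN.of_edge ?_) (LinkN.of_edge ?_)
    · exact ⟨by omega, hv1, by omega, Or.inr <| Or.inr <| Or.inl (by omega)⟩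
    · exact ⟨by omega, by omega, by omega, Or.inr <| Or.inr <| Or.inr (by omega)⟩

/-- going down by `a` -/
lemma link_down (ha : 1 ≤ a) (hb : 1 ≤ b) {v : ℕ} (hva : a + 1 ≤ v) (hvM : v ≤ a + b)
    (h1 : 2*v ≠ a + b) (h2 : 2*v ≠ 2*a + b) : LinkN a b v (v - a) := by
  rcases eq_or_lt_of_le hvM with hveq | hvlt
  · -- direct edge (a+b) ~ b with sum a + 2b
    exact LinkN.of_edge ⟨by omega, by omega, by omega, Or.inr <| Or.inr <| Or.inr (by omega)⟩
  · -- v → a + b - v → v - a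
    refine LinkN.trans (y := a + b - v) (LinkN.of_edge ?_) (LinkN.of_edge ?_)
    · exact ⟨by omega, by omega, by omega, Or.inr <| Or.inr <| Or.inl (by omega)⟩
    · exact ⟨by omega, by omega, by omega, Or.inr <| Or.inl (by omega)⟩

end Routes

/-- the rotation map on `[1, a+b]` -/
def rot (a b v : ℕ) : ℕ := if v + b ≤ a + b then v + b else v - a

/-- the unique "stuck" vertex of the rotation -/
def stuck (a b : ℕ) : ℕ :=
  if 2 ∣ a then a / 2 else if 2 ∣ b then a + b / 2 else (a + b) / 2

lemma rot_bounds {a b v : ℕ} (ha : 1 ≤ a) (hb : 1 ≤ b) (hv1 : 1 ≤ v) (hvM : v ≤ a + b) :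
    1 ≤ rot a b v ∧ rot a b v ≤ a + b := by
  unfold rot; split <;> omega

lemma rot_inv {a b u : ℕ} (ha : 1 ≤ a) (hb : 1 ≤ b) (hu1 : 1 ≤ u) (huM : u ≤ a + b) :
    rot a b (rot b a u) = u := by
  rcases le_or_gt (u + a) (b + a) with h | h
  · have e1 : rot b a u = u + a := if_pos h
    rw [e1]; unfold rot
    rw [if_neg (by omega)]; omega
  · have e1 : rot b a u = u - b := if_neg (by omega)
    rw [e1]; unfold rot
    rw [if_pos (by omega)]; omega

lemma step_ok {a b : ℕ} (ha : 1 ≤ a) (hb : 1 ≤ b) (hcop : Nat.Coprime a b) (hne : a ≠ b)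
    {v : ℕ} (hv1 : 1 ≤ v) (hvM : v ≤ a + b) (hw : v ≠ stuck a b) : LinkN a b v (rot a b v) := by
  have hnotboth : ¬ (2 ∣ a ∧ 2 ∣ b) := by
    rintro ⟨h1, h2⟩
    have : (2:ℕ) ∣ Nat.gcd a b := Nat.dvd_gcd h1 h2
    rw [hcop] at this; omega
  unfold rot
  split
  · -- up
    have hva : v ≤ a := by omega
    have hmid : 2*v ≠ a := by
      intro hcon
      have h2a : 2 ∣ a := ⟨v, by omega⟩
      apply hw; unfold stuck; rw [if_pos h2a]; omega
    exact link_up ha hb hne hv1 hva hmid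
  · -- down
    have hva : a + 1 ≤ v := by omega
    have h1 : 2*v ≠ a + b := by
      intro hcon
      have hao : ¬ 2 ∣ a := by
        intro h2a
        have : 2 ∣ b := by omega
        exact hnotboth ⟨h2a, this⟩
      have hbo : ¬ 2 ∣ b := by
        intro h2b
        have : 2 ∣ a := by omega
        exact hnotboth ⟨this, h2b⟩
      apply hw; unfold stuck; rw [if_neg hao, if_neg hbo]; omega
    have h2 : 2*v ≠ 2*a + b := by
      intro hcon
      have h2b : 2 ∣ b := ⟨v - a, by omega⟩
      have hao : ¬ 2 ∣ a := fun h2a => hnotboth ⟨h2a, h2b⟩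
      apply hw; unfold stuck; rw [if_neg hao, if_pos h2b]; omega
    exact link_down ha hb hva hvM h1 h2


section Walk
variable {a b : ℕ}

/-- position after `k` rotation steps starting from `x` -/
def pos (a b x k : ℕ) : ℕ := (x - 1 + k * b) % (a + b) + 1

lemma pos_zero (ha : 1 ≤ a) (hb : 1 ≤ b) {x : ℕ} (hx1 : 1 ≤ x) (hxM : x ≤ a + b) :
    pos a b x 0 = x := by
  unfold pos
  rw [Nat.zero_mul, Nat.add_zero, Nat.mod_eq_of_lt (by omega)]
  omega

lemma pos_bounds (ha : 1 ≤ a) (hb : 1 ≤ b) (x k : ℕ) :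
    1 ≤ pos a b x k ∧ pos a b x k ≤ a + b := by
  unfold pos
  have := Nat.mod_lt (x - 1 + k * b) (y := a + b) (by omega)
  omega

lemma pos_succ (ha : 1 ≤ a) (hb : 1 ≤ b) (x k : ℕ) :
    pos a b x (k + 1) = rot a b (pos a b x k) := by
  have hM : 0 < a + b := by omega
  set c := (x - 1 + k * b) % (a + b) with hc
  have hclt : c < a + b := Nat.mod_lt _ hM
  have e2 : pos a b x (k+1) = (c + b) % (a + b) + 1 := by
    unfold pos
    congr 1
    have e1 : x - 1 + (k+1) * b = (x - 1 + k * b) + b := by ring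
    rw [e1, hc, Nat.add_mod, Nat.mod_eq_of_lt (show b < a + b by omega)]
  rcases lt_or_ge (c + b) (a + b) with h | h
  · rw [e2, Nat.mod_eq_of_lt h]
    show c + b + 1 = rot a b (c + 1)
    unfold rot
    rw [if_pos (by omega)]
    omega
  · rw [e2, Nat.mod_eq_sub_mod h, Nat.mod_eq_of_lt (by omega)]
    show c + b - (a + b) + 1 = rot a b (c + 1)
    unfold rot
    rw [if_neg (by omega)]
    omega

lemma pos_inj (ha : 1 ≤ a) (hb : 1 ≤ b) (hcop : Nat.Coprime a b) {x j j' : ℕ}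
    (h : pos a b x j = pos a b x j') : j % (a + b) = j' % (a + b) := by
  have hM : 0 < a + b := by omega
  have hcop' : Nat.gcd (a + b) b = 1 := by
    have := (Nat.coprime_add_self_left (m := a) (n := b)).mpr hcop
    exact this
  have hmod : (x - 1 + j * b) % (a+b) = (x - 1 + j' * b) % (a+b) := by
    unfold pos at h; omega
  have h1 : x - 1 + j * b ≡ x - 1 + j' * b [MOD a + b] := hmod
  have h2 : j * b ≡ j' * b [MOD a + b] := Nat.ModEq.add_left_cancel' (x - 1) h1
  exact Nat.ModEq.cancel_right_of_coprime hcop' h2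

/-- swapping the roles of `a` and `b` runs the rotation backwards -/
lemma pos_swap (ha : 1 ≤ a) (hb : 1 ≤ b) {x i : ℕ} (hi : i ≤ a + b) :
    pos b a x i = pos a b x (a + b - i) := by
  unfold pos
  have e : b + a = a + b := by omega
  rw [e]
  congr 1
  have key : (x - 1 + i * a) + i * b ≡ (x - 1 + (a + b - i) * b) + i * b [MOD a + b] := by
    have hA : (x - 1 + i * a) + i * b = (x - 1) + i * (a + b) := by ring
    have hB : (x - 1 + (a + b - i) * b) + i * b = (x - 1) + (a + b) * b := by
      have h2 : (a + b - i) * b + i * b = (a + b) * b := by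
        rw [← Nat.add_mul]
        congr 1
        omega
      omega
    show _ % _ = _ % _
    rw [hA, hB, Nat.add_mul_mod_self_right, Nat.add_mul_mod_self_left]
  exact Nat.ModEq.add_right_cancel' (i * b) key

/-- chaining links along a walk -/
lemma link_chain {a b : ℕ} (r : ℕ → ℕ) (k : ℕ)
    (h : ∀ i, i < k → LinkN a b (r i) (r (i + 1))) : LinkN a b (r 0) (r k) := by
  induction k with
  | zero => exact LinkN.refl a b _
  | succ k ih =>
    exact (ih (fun i hi => h i (by omega))).trans (h k (by omega))

/-- Every `x` in `[2, a+b-1]` is linked to `x - 1`. -/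
lemma link_pred {a b : ℕ} (ha : 1 ≤ a) (hb : 1 ≤ b) (hcop : Nat.Coprime a b) (hne : a ≠ b)
    {x : ℕ} (hx : 2 ≤ x) (hxM : x + 1 ≤ a + b) : LinkN a b x (x - 1) := by
  set M := a + b with hM
  have hM3 : 3 ≤ M := by
    rcases Nat.lt_or_ge a b with h | h
    · omega
    · have : b < a := lt_of_le_of_ne h (Ne.symm hne); omega
  have hcopbM : Nat.Coprime b M := by
    rw [hM]
    exact (Nat.coprime_add_self_right).mpr hcop.symm
  obtain ⟨k', -, hk'⟩ := Nat.exists_mul_mod_eq_one_of_coprime hcopbM (by omega)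
  have hcopk' : Nat.Coprime k' M := by
    have h1 : b * k' % M + M * (b * k' / M) = b * k' := Nat.mod_add_div _ _
    rw [hk'] at h1
    have hd1 : Nat.gcd k' M ∣ k' := Nat.gcd_dvd_left _ _
    have hd2 : Nat.gcd k' M ∣ M := Nat.gcd_dvd_right _ _
    have hd3 : Nat.gcd k' M ∣ b * k' := Dvd.dvd.mul_left hd1 b
    have hd4 : Nat.gcd k' M ∣ M * (b * k' / M) := Dvd.dvd.mul_right hd2 _
    have : Nat.gcd k' M ∣ 1 := by
      have hsub := Nat.dvd_sub hd3 hd4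
      rw [show b * k' - M * (b * k' / M) = 1 by omega] at hsub
      exact hsub
    exact Nat.eq_one_of_dvd_one this
  have hKex : ∃ k, 1 ≤ k ∧ k < M ∧ pos a b x k = x - 1 := by
    refine ⟨(M - 1) * k' % M, ?_, Nat.mod_lt _ (by omega), ?_⟩
    · rcases Nat.eq_zero_or_pos ((M - 1) * k' % M) with h0 | h0
      · exfalso
        have hdvd : M ∣ (M - 1) * k' := Nat.dvd_of_mod_eq_zero h0
        have hdd := Nat.Coprime.dvd_of_dvd_mul_right hcopk'.symm hdvd
        have hle : M ≤ M - 1 := Nat.le_of_dvd (by omega) hdd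
        omega
      · exact h0
    · unfold pos
      rw [← hM]
      have h1 : ((M-1) * k' % M) * b ≡ (M - 1) * (k' * b) [MOD M] := by
        calc ((M-1) * k' % M) * b ≡ ((M-1) * k') * b [MOD M] :=
              Nat.ModEq.mul_right b (Nat.mod_modEq _ _)
          _ = (M - 1) * (k' * b) := by ring
      have h2 : (M - 1) * (k' * b) ≡ (M - 1) * 1 [MOD M] := by
        refine Nat.ModEq.mul_left _ ?_
        show k' * b ≡ 1 [MOD M]
        have hc : k' * b % M = 1 := by rw [Nat.mul_comm]; exact hk'
        show k' * b % M = 1 % M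
        rw [hc, Nat.mod_eq_of_lt (by omega)]
      have h3 : x - 1 + ((M-1) * k' % M) * b ≡ x - 1 + (M - 1) [MOD M] := by
        refine Nat.ModEq.add_left _ ?_
        calc ((M-1) * k' % M) * b ≡ (M-1) * (k' * b) [MOD M] := h1
          _ ≡ (M - 1) * 1 [MOD M] := h2
          _ = M - 1 := by ring
      have h4 : (x - 1 + (M - 1)) % M = x - 2 := by
        have he : x - 1 + (M - 1) = (x - 2) + M := by omega
        rw [he, Nat.add_mod_right, Nat.mod_eq_of_lt (by omega)]
      have h5 : (x - 1 + ((M-1) * k' % M) * b) % M = x - 2 := by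
        unfold Nat.ModEq at h3
        omega
      omega
  set k0 := Nat.find hKex with hk0def
  obtain ⟨hk01, hk0M, hk0pos⟩ := Nat.find_spec hKex
  by_cases hfwd : ∀ j, j < k0 → pos a b x j ≠ stuck a b
  · -- forward walk
    have hchain := link_chain (a := a) (b := b) (pos a b x) k0 (fun i hi => by
      rw [pos_succ ha hb]
      have hbd := pos_bounds (a := a) (b := b) ha hb x i
      exact step_ok ha hb hcop hne hbd.1 hbd.2 (hfwd i hi))
    rw [pos_zero ha hb (by omega) (by omega), hk0pos] at hchain
    exact hchain
  · -- backward walk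
    push_neg at hfwd
    obtain ⟨js, hjs1, hjs2⟩ := hfwd
    set k1 := M - k0 with hk1
    have hq_end : pos b a x k1 = x - 1 := by
      rw [pos_swap ha hb (by omega)]
      have he : a + b - k1 = k0 := by omega
      rw [he]
      exact hk0pos
    have hq_ok : ∀ i, i < k1 → pos b a x (i+1) ≠ stuck a b := by
      intro i hi hcon
      have he : pos b a x (i+1) = pos a b x (M - (i+1)) := pos_swap ha hb (by omega)
      have heq : pos a b x (M - (i+1)) = pos a b x js := by rw [← he, hcon, ← hjs2]
      have hmod := pos_inj ha hb hcop heq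
      rw [← hM] at hmod
      have h1 : (M - (i+1)) % M = M - (i+1) := Nat.mod_eq_of_lt (by omega)
      have h2 : js % M = js := Nat.mod_eq_of_lt (by omega)
      omega
    have hchain := link_chain (a := a) (b := b) (pos b a x) k1 (fun i hi => by
      have hbd := pos_bounds (a := b) (b := a) hb ha x i
      have hbd' := pos_bounds (a := b) (b := a) hb ha x (i+1)
      have hstep : pos b a x (i+1) = rot b a (pos b a x i) := pos_succ hb ha x i
      have hok := step_ok ha hb hcop hne (v := pos b a x (i+1)) (by omega) (by omega)
        (hq_ok i hi)
      have hinv : rot a b (pos b a x (i+1)) = pos b a x i := by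
        rw [hstep]
        exact rot_inv ha hb (by omega) (by omega)
      rw [hinv] at hok
      exact hok.symm)
    rw [pos_zero hb ha (by omega) (by omega), hq_end] at hchain
    exact hchain

end Walk

/-! ### Base colorings -/

/-- A coloring of `[1, a+b)` that is proper for all in-range edges. -/
def GoodN (a b : ℕ) (c : ℕ → Bool) : Prop :=
  ∀ x y, 1 ≤ x → x < y → y < a + b →
    (x + y = a ∨ x + y = b ∨ x + y = a + b ∨ x + y = a + 2*b) → c x ≠ c y

lemma mod_sum_cases {b u v ρ : ℕ} (hb : 0 < b) (hu : u < b) (hv : v < b)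
    (h : (u + v) % b = ρ) : u + v = ρ ∨ u + v = ρ + b := by
  rcases lt_or_ge (u + v) b with h1 | h1
  · left; rw [Nat.mod_eq_of_lt h1] at h; omega
  · right
    rw [Nat.mod_eq_sub_mod h1, Nat.mod_eq_of_lt (by omega)] at h
    omega

lemma coprime_of_inv {g m k : ℕ} (h : k * g % m = 1) (hm : 2 ≤ m) : Nat.Coprime g m := by
  have h1 : k * g % m + m * (k * g / m) = k * g := Nat.mod_add_div _ _
  rw [h] at h1
  have hd1 : Nat.gcd g m ∣ g := Nat.gcd_dvd_left _ _
  have hd2 : Nat.gcd g m ∣ m := Nat.gcd_dvd_right _ _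
  have hd3 : Nat.gcd g m ∣ k * g := Dvd.dvd.mul_left hd1 k
  have hd4 : Nat.gcd g m ∣ m * (k * g / m) := Dvd.dvd.mul_right hd2 _
  have hdd : Nat.gcd g m ∣ 1 := by
    have hsub := Nat.dvd_sub hd3 hd4
    rw [show k * g - m * (k * g / m) = 1 by omega] at hsub
    exact hsub
  exact Nat.eq_one_of_dvd_one hdd

lemma rmod_ne_zero {g m z : ℕ} (hcop : Nat.Coprime g m) (h1 : 1 ≤ z) (h2 : z < m) :
    (g * z) % m ≠ 0 := by
  intro h0
  have hdvd : m ∣ g * z := Nat.dvd_of_mod_eq_zero h0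
  have := Nat.Coprime.dvd_of_dvd_mul_left (Nat.Coprime.symm hcop) hdvd
  have := Nat.le_of_dvd (by omega) this
  omega

lemma rmod_inj {g m z w : ℕ} (hm : 0 < m) (hcop : Nat.Coprime g m)
    (h : (g * z) % m = (g * w) % m) (hzw : z ≤ w) (hlt : w - z < m) : z = w := by
  have h1 : g * z ≡ g * w [MOD m] := h
  have h2 : z ≡ w [MOD m] := Nat.ModEq.cancel_left_of_coprime (by rw [Nat.coprime_comm] at hcop; exact hcop) h1
  have h3 : m ∣ w - z := (Nat.modEq_iff_dvd' hzw).mp h2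
  rcases Nat.eq_zero_or_pos (w - z) with h4 | h4
  · omega
  · have := Nat.le_of_dvd h4 h3
    omega

/-- case `b` even : explicit coloring, no region needed -/
lemma good_even_b {a b : ℕ} (ha : 1 ≤ a) (hb2 : 2 ≤ b) (hbe : 2 ∣ b)
    (hcop : Nat.Coprime a b) : ∃ c, GoodN a b c := by
  obtain ⟨g, -, hg⟩ := Nat.exists_mul_mod_eq_one_of_coprime hcop (by omega)
  refine ⟨fun x => decide ((g * x) % b = 0 ∨ b / 2 < (g * x) % b), ?_⟩
  intro x y hx hxy hyR hsum
  obtain ⟨T, hT⟩ := hbe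
  have hT1 : 1 ≤ T := by omega
  have hgb : Nat.Coprime g b := coprime_of_inv hg (by omega)
  have hrxb : (g * x) % b < b := Nat.mod_lt _ (by omega)
  have hryb : (g * y) % b < b := Nat.mod_lt _ (by omega)
  have hadd : ((g * x) % b + (g * y) % b) % b = (g * (x + y)) % b := by
    rw [Nat.mul_add]
    exact (Nat.add_mod _ _ _).symm
  simp only [ne_eq, decide_eq_decide]
  have hb2' : b / 2 = T := by omega
  rw [hb2']
  rcases hsum with hs | hs | hs | hs
  · -- sum = a
    have hρ : (g * (x+y)) % b = 1 := by rw [hs, Nat.mul_comm]; exact hg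
    rw [hρ] at hadd
    have := mod_sum_cases (by omega) hrxb hryb hadd
    omega
  · -- sum = b
    have hρ : (g * (x+y)) % b = 0 := by rw [hs]; exact Nat.mul_mod_left _ _
    rw [hρ] at hadd
    have hcases := mod_sum_cases (by omega) hrxb hryb hadd
    have hx0 : (g * x) % b ≠ 0 := rmod_ne_zero hgb hx (by omega)
    have hy0 : (g * y) % b ≠ 0 := rmod_ne_zero hgb (by omega) (by omega)
    have hne : (g * x) % b ≠ (g * y) % b := by
      intro hcon
      have := rmod_inj (by omega) hgb hcon (by omega) (by omega)
      omega
    omega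
  · -- sum = a + b
    have hρ : (g * (x+y)) % b = 1 := by
      have he : g * (a + b) = a * g + g * b := by ring
      rw [hs, he, Nat.add_mul_mod_self_right]
      exact hg
    rw [hρ] at hadd
    have := mod_sum_cases (by omega) hrxb hryb hadd
    omega
  · -- sum = a + 2b
    have hρ : (g * (x+y)) % b = 1 := by
      have he : g * (a + 2*b) = a * g + (g * 2) * b := by ring
      rw [hs, he, Nat.add_mul_mod_self_right]
      exact hg
    rw [hρ] at hadd
    have := mod_sum_cases (by omega) hrxb hryb hadd
    omega


/-- case `a` even : explicit coloring, uses the region bound for the `a+2b` sums -/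
lemma good_even_a {a b : ℕ} (ha2 : 2 ≤ a) (hae : 2 ∣ a) (hb : 1 ≤ b)
    (hcop : Nat.Coprime a b) : ∃ c, GoodN a b c := by
  obtain ⟨g, -, hg⟩ := Nat.exists_mul_mod_eq_one_of_coprime hcop.symm (by omega)
  refine ⟨fun x => decide ((g * x) % a = 0 ∨ a / 2 < (g * x) % a), ?_⟩
  intro x y hx hxy hyR hsum
  obtain ⟨T, hT⟩ := hae
  have hT1 : 1 ≤ T := by omega
  have hga : Nat.Coprime g a := coprime_of_inv hg (by omega)
  have hrxa : (g * x) % a < a := Nat.mod_lt _ (by omega)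
  have hrya : (g * y) % a < a := Nat.mod_lt _ (by omega)
  have hadd : ((g * x) % a + (g * y) % a) % a = (g * (x + y)) % a := by
    rw [Nat.mul_add]
    exact (Nat.add_mod _ _ _).symm
  simp only [ne_eq, decide_eq_decide]
  have ha2' : a / 2 = T := by omega
  rw [ha2']
  rcases hsum with hs | hs | hs | hs
  · -- sum = a
    have hρ : (g * (x+y)) % a = 0 := by rw [hs]; exact Nat.mul_mod_left _ _
    rw [hρ] at hadd
    have hcases := mod_sum_cases (by omega) hrxa hrya hadd
    have hx0 : (g * x) % a ≠ 0 := rmod_ne_zero hga hx (by omega)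
    have hy0 : (g * y) % a ≠ 0 := rmod_ne_zero hga (by omega) (by omega)
    have hne : (g * x) % a ≠ (g * y) % a := by
      intro hcon
      have := rmod_inj (by omega) hga hcon (by omega) (by omega)
      omega
    omega
  · -- sum = b
    have hρ : (g * (x+y)) % a = 1 := by rw [hs, Nat.mul_comm]; exact hg
    rw [hρ] at hadd
    have := mod_sum_cases (by omega) hrxa hrya hadd
    omega
  · -- sum = a + b
    have hρ : (g * (x+y)) % a = 1 := by
      have he : g * (a + b) = b * g + g * a := by ring
      rw [hs, he, Nat.add_mul_mod_self_right]
      exact hg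
    rw [hρ] at hadd
    have := mod_sum_cases (by omega) hrxa hrya hadd
    omega
  · -- sum = a + 2b : here both x and y lie in the open interval (b, a+b)
    have hxb : b < x := by omega
    have hne : (g * x) % a ≠ (g * y) % a := by
      intro hcon
      have := rmod_inj (by omega) hga hcon (by omega) (by omega)
      omega
    have hρ : (g * (x+y)) % a = 2 % a := by
      have he : g * (a + 2*b) = 2 * (b * g) + g * a := by ring
      rw [hs, he, Nat.add_mul_mod_self_right, Nat.mul_mod, hg]
      simp [Nat.mod_mod]
    rw [hρ] at hadd
    have hcases := mod_sum_cases (by omega) hrxa hrya hadd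
    have h2a : 2 % a = 2 ∨ (a = 2 ∧ 2 % a = 0) := by
      rcases Nat.lt_or_ge a 3 with h | h
      · right; omega
      · left; exact Nat.mod_eq_of_lt (by omega)
    omega


/-- case both odd, `a < b` : glue the even construction for the pair `(b-a, a)`. -/
lemma good_odd {a b : ℕ} (ha : 1 ≤ a) (hab : a < b) (hao : ¬ 2 ∣ a) (hbo : ¬ 2 ∣ b)
    (hcop : Nat.Coprime a b) : ∃ c, GoodN a b c := by
  have hba2 : 2 ≤ b - a := by omega
  have hbae : 2 ∣ (b - a) := by omega
  have hcop' : Nat.Coprime (b - a) a := by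
    have h1 : Nat.Coprime ((b - a) + a) a ↔ Nat.Coprime (b - a) a := Nat.coprime_add_self_left
    rw [show (b - a) + a = b by omega] at h1
    exact h1.mp hcop.symm
  obtain ⟨c₁, hc₁⟩ := good_even_a hba2 hbae ha hcop'
  have hsum1 : (b - a) + a = b := by omega
  refine ⟨fun x => if x < b then c₁ x else !(c₁ (a + b - x)), ?_⟩
  intro x y hx hxy hyR hsum
  rcases hsum with hs | hs | hs | hs
  · -- sum = a : both < b
    have h1 : x < b := by omega
    have h2 : y < b := by omega
    simp only [if_pos h1, if_pos h2]
    exact hc₁ x y hx hxy (by omega) (by omega)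
  · -- sum = b : both < b
    have h1 : x < b := by omega
    have h2 : y < b := by omega
    simp only [if_pos h1, if_pos h2]
    exact hc₁ x y hx hxy (by omega) (by omega)
  · -- sum = a + b
    rcases lt_or_ge y b with h2 | h2
    · have h1 : x < b := by omega
      simp only [if_pos h1, if_pos h2]
      exact hc₁ x y hx hxy (by omega) (by omega)
    · have h1 : x < b := by omega
      simp only [if_pos h1, if_neg (not_lt.mpr h2)]
      have hxeq : a + b - y = x := by omega
      rw [hxeq]
      cases hcx : c₁ x <;> simp [hcx]
  · -- sum = a + 2b : both in (b, a+b)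
    have h1 : ¬ x < b := by omega
    have h2 : ¬ y < b := by omega
    simp only [if_neg h1, if_neg h2]
    have hkey : c₁ (a + b - y) ≠ c₁ (a + b - x) := by
      refine hc₁ (a + b - y) (a + b - x) (by omega) (by omega) (by omega) ?_
      right; left
      omega
    cases hcy : c₁ (a + b - y) <;> cases hcx : c₁ (a + b - x) <;>
      simp_all

/-- Master construction: every admissible pair has a good base coloring. -/
lemma exists_good {a b : ℕ} (ha : 1 ≤ a) (hb : 1 ≤ b) (hcop : Nat.Coprime a b)
    (hyp : a < b ∨ 2 ∣ a ∨ 2 ∣ b) : ∃ c, GoodN a b c := by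
  by_cases hbe : 2 ∣ b
  · exact good_even_b ha (by omega) hbe hcop
  · by_cases hae : 2 ∣ a
    · exact good_even_a (by omega) hae hb hcop
    · have hab : a < b := by tauto
      exact good_odd ha hab hae hbe hcop


/-! ### The global coloring -/

open Classical in
/-- `fstep t x` is `t n - x` for the least `n ≥ 3` with `t n > x` (0 as junk default). -/
noncomputable def fstep (t : ℕ → ℕ) (x : ℕ) : ℕ :=
  if h : ∃ n, 3 ≤ n ∧ x < t n then t (Nat.find h) - x else 0

/-- the global coloring: base coloring below `t 1 + t 2`, reflecting recursion above. -/
noncomputable def cg (t : ℕ → ℕ) (c₀ : ℕ → Bool) (x : ℕ) : Bool :=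
  if x < t 1 + t 2 then c₀ x
  else if h : 1 ≤ fstep t x ∧ fstep t x < x then !(cg t c₀ (fstep t x)) else true
termination_by x
decreasing_by exact h.2

lemma cg_low {t : ℕ → ℕ} {c₀ : ℕ → Bool} {x : ℕ} (h : x < t 1 + t 2) :
    cg t c₀ x = c₀ x := by
  rw [cg, if_pos h]

lemma cg_rec {t : ℕ → ℕ} {c₀ : ℕ → Bool} {x m : ℕ} (hx : t 1 + t 2 ≤ x)
    (h3 : 3 ≤ m) (hm : x < t m) (hmin : ∀ n, 3 ≤ n → x < t n → m ≤ n)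
    (hlt : t m < 2 * x) : cg t c₀ x = !(cg t c₀ (t m - x)) := by
  have hex : ∃ n, 3 ≤ n ∧ x < t n := ⟨m, h3, hm⟩
  have hfind : Nat.find hex = m := by
    rw [Nat.find_eq_iff]
    exact ⟨⟨h3, hm⟩, fun n hn hc => by have := hmin n hc.1 hc.2; omega⟩
  have hfs : fstep t x = t m - x := by
    unfold fstep
    rw [dif_pos hex, hfind]
    
  rw [cg, if_neg (not_lt.mpr hx), hfs]
  rw [dif_pos ⟨by omega, by omega⟩]

section Global
variable {t : ℕ → ℕ} {c₀ : ℕ → Bool}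

/-- Properness of the global coloring. -/
lemma cg_good (Hpos : ∀ n, 1 ≤ n → 1 ≤ t n)
    (Hrec : ∀ n, 1 ≤ n → t (n + 2) = t (n + 1) + t n)
    (HGood : GoodN (t 1) (t 2) c₀) :
    ∀ m, 1 ≤ m → ∀ x y, 1 ≤ x → x < y → x + y = t m →
      cg t c₀ x ≠ cg t c₀ y := by
  have trec : ∀ i, 1 ≤ i → ∀ j l, j = i + 2 → l = i + 1 → t j = t l + t i := by
    intro i hi j l hj hl
    subst hj; subst hl
    exact Hrec i hi
  have hstep : ∀ j, 2 ≤ j → t j < t (j + 1) := by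
    intro j hj
    have h1 := trec (j - 1) (by omega) (j + 1) j (by omega) (by omega)
    have h2 := Hpos (j - 1) (by omega)
    omega
  have hmono : ∀ i j, 2 ≤ i → i ≤ j → t i ≤ t j := by
    have key : ∀ d i, 2 ≤ i → t i ≤ t (i + d) := by
      intro d
      induction d with
      | zero => intro i _; simp
      | succ d ih =>
        intro i hi
        have h1 := ih i hi
        have h2 := hstep (i + d) (by omega)
        have he : i + (d + 1) = (i + d) + 1 := by omega
        rw [he]
        omega
    intro i j hi hij
    obtain ⟨d, rfl⟩ : ∃ d, j = i + d := ⟨j - i, by omega⟩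
    exact key d i hi
  have hM : t 3 = t 2 + t 1 := trec 1 (by omega) 3 2 (by omega) (by omega)
  intro m
  induction m using Nat.strong_induction_on with
  | _ m IH =>
    intro hm x y hx hxy hsum
    match m, hm with
    | 1, _ =>
      have h1 : y < t 1 + t 2 := by have := Hpos 2 (by omega); omega
      rw [cg_low (by omega), cg_low (by omega)]
      exact HGood x y hx hxy h1 (Or.inl hsum)
    | 2, _ =>
      have h1 : y < t 1 + t 2 := by have := Hpos 1 (by omega); omega
      rw [cg_low (by omega), cg_low (by omega)]
      exact HGood x y hx hxy h1 (Or.inr (Or.inl hsum))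
    | 3, _ =>
      have h1 : y < t 1 + t 2 := by omega
      rw [cg_low (by omega), cg_low (by omega)]
      exact HGood x y hx hxy h1 (Or.inr (Or.inr (Or.inl (by omega))))
    | 4, _ =>
      have ht4 : t 4 = t 1 + 2 * t 2 := by
        have h1 := trec 2 (by omega) 4 3 (by omega) (by omega)
        omega
      rcases lt_or_ge y (t 1 + t 2) with h1 | h1
      · rw [cg_low (by omega), cg_low h1]
        exact HGood x y hx hxy h1 (Or.inr (Or.inr (Or.inr (by omega))))
      · have hrecy : cg t c₀ y = !(cg t c₀ (t 4 - y)) := by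
          refine cg_rec h1 (by omega) (by omega) ?_ (by omega)
          intro n h3n hyn
          by_contra hc
          have : n = 3 := by omega
          subst this
          omega
        have hxeq : t 4 - y = x := by omega
        rw [hrecy, hxeq]
        cases cg t c₀ x <;> simp
    | (k + 5), _ =>
      have h5a := trec (k + 3) (by omega) (k + 5) (k + 4) (by omega) (by omega)
      have h5b := trec (k + 2) (by omega) (k + 4) (k + 3) (by omega) (by omega)
      have h5c := trec (k + 1) (by omega) (k + 3) (k + 2) (by omega) (by omega)
      have hmono3 : t 3 ≤ t (k + 3) := hmono 3 (k+3) (by omega) (by omega)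
      have hstepk : t (k + 2) < t (k + 3) := by
        have := hstep (k + 2) (by omega)
        have he : k + 2 + 1 = k + 3 := by omega
        rw [he] at this
        exact this
      have hstepk1 : t (k + 3) < t (k + 4) := by
        have := hstep (k + 3) (by omega)
        have he : k + 3 + 1 = k + 4 := by omega
        rw [he] at this
        exact this
      have hygt : t (k + 3) < y := by omega
      rcases le_or_gt (t (k + 4)) y with h1 | h1
      · -- y in [t (k+4), t (k+5))
        have hrecy : cg t c₀ y = !(cg t c₀ (t (k+5) - y)) := by
          refine cg_rec (by omega) (by omega) (by omega) ?_ (by omega)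
          intro n h3n hyn
          by_contra hc
          have hn4 : t n ≤ t (k + 4) := hmono n (k+4) (by omega) (by omega)
          omega
        have hxeq : t (k+5) - y = x := by omega
        rw [hrecy, hxeq]
        cases cg t c₀ x <;> simp
      · -- t (k+3) < y < t (k+4), and the same for x
        have hxgt : t (k + 3) < x := by omega
        have hminx : ∀ n, 3 ≤ n → x < t n → k + 4 ≤ n := by
          intro n h3n hyn
          by_contra hc
          have hn3 : t n ≤ t (k + 3) := hmono n (k+3) (by omega) (by omega)
          omega
        have hminy : ∀ n, 3 ≤ n → y < t n → k + 4 ≤ n := by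
          intro n h3n hyn
          by_contra hc
          have hn3 : t n ≤ t (k + 3) := hmono n (k+3) (by omega) (by omega)
          omega
        have hrecy : cg t c₀ y = !(cg t c₀ (t (k+4) - y)) :=
          cg_rec (by omega) (by omega) (by omega) hminy (by omega)
        have hrecx : cg t c₀ x = !(cg t c₀ (t (k+4) - x)) :=
          cg_rec (by omega) (by omega) (by omega) hminx (by omega)
        have hIH := IH (k + 2) (by omega) (by omega) (t (k+4) - y) (t (k+4) - x)
          (by omega) (by omega) (by omega)
        rw [hrecx, hrecy]
        cases hcy : cg t c₀ (t (k+4) - y) <;> cases hcx : cg t c₀ (t (k+4) - x) <;>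
          simp_all


end Global

/-- global edges: distinct positives whose sum is some `t m`, `m ≥ 1`. -/
def EdgeS (t : ℕ → ℕ) (u v : ℕ) : Prop :=
  u ≠ v ∧ 1 ≤ u ∧ 1 ≤ v ∧ ∃ m, 1 ≤ m ∧ u + v = t m

def LinkS (t : ℕ → ℕ) (x y : ℕ) : Prop :=
  ∀ P Q : ℕ → Prop, (∀ u v, EdgeS t u v → (P u ↔ ¬ P v)) →
    (∀ u v, EdgeS t u v → (Q u ↔ ¬ Q v)) → ((P x ↔ P y) ↔ (Q x ↔ Q y))

lemma LinkS.refl (t : ℕ → ℕ) (x : ℕ) : LinkS t x x := fun _ _ _ _ => by tauto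

lemma LinkS.of_edge {t : ℕ → ℕ} {x y : ℕ} (h : EdgeS t x y) : LinkS t x y := by
  intro P Q hP hQ
  have h1 := hP _ _ h
  have h2 := hQ _ _ h
  tauto

lemma LinkS.trans {t : ℕ → ℕ} {x y z : ℕ} (h1 : LinkS t x y) (h2 : LinkS t y z) :
    LinkS t x z := by
  intro P Q hP hQ
  have := h1 P Q hP hQ
  have := h2 P Q hP hQ
  tauto

lemma LinkN_to_LinkS {t : ℕ → ℕ} (Hrec : ∀ n, 1 ≤ n → t (n + 2) = t (n + 1) + t n)
    {x y : ℕ} (h : LinkN (t 1) (t 2) x y) : LinkS t x y := by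
  have h3 : t 3 = t 2 + t 1 := by
    have := Hrec 1 (by omega); convert this using 2
  have h4 : t 4 = t 3 + t 2 := by
    have := Hrec 2 (by omega); convert this using 2
  intro P Q hP hQ
  refine h P Q (fun u v he => hP u v ?_) (fun u v he => hQ u v ?_)
  all_goals {
    obtain ⟨hne, hu, hv, hsum⟩ := he
    refine ⟨hne, hu, hv, ?_⟩
    rcases hsum with hs | hs | hs | hs
    · exact ⟨1, by omega, hs⟩
    · exact ⟨2, by omega, hs⟩
    · exact ⟨3, by omega, by omega⟩
    · exact ⟨4, by omega, by omega⟩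
  }

section Descent
variable {t : ℕ → ℕ}

/-- every `x ≥ 2` is globally linked to some smaller positive integer -/
lemma descent (Hpos : ∀ n, 1 ≤ n → 1 ≤ t n)
    (Hrec : ∀ n, 1 ≤ n → t (n + 2) = t (n + 1) + t n)
    (hcop : Nat.Coprime (t 1) (t 2)) (hne : t 1 ≠ t 2) :
    ∀ x, 2 ≤ x → ∃ y, 1 ≤ y ∧ y < x ∧ LinkS t x y := by
  have trec : ∀ i, 1 ≤ i → ∀ j l, j = i + 2 → l = i + 1 → t j = t l + t i := by
    intro i hi j l hj hl
    subst hj; subst hl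
    exact Hrec i hi
  have hstep : ∀ j, 2 ≤ j → t j < t (j + 1) := by
    intro j hj
    have h1 := trec (j - 1) (by omega) (j + 1) j (by omega) (by omega)
    have h2 := Hpos (j - 1) (by omega)
    omega
  have hmono : ∀ i j, 2 ≤ i → i ≤ j → t i ≤ t j := by
    have key : ∀ d i, 2 ≤ i → t i ≤ t (i + d) := by
      intro d
      induction d with
      | zero => intro i _; simp
      | succ d ih =>
        intro i hi
        have h1 := ih i hi
        have h2 := hstep (i + d) (by omega)
        have he : i + (d + 1) = (i + d) + 1 := by omega
        rw [he]
        omega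
    intro i j hi hij
    obtain ⟨d, rfl⟩ : ∃ d, j = i + d := ⟨j - i, by omega⟩
    exact key d i hi
  have hM : t 3 = t 2 + t 1 := trec 1 (by omega) 3 2 (by omega) (by omega)
  have hpos1 := Hpos 1 (by omega)
  have hpos2 := Hpos 2 (by omega)
  intro x hx
  rcases lt_or_ge x (t 1 + t 2) with hxM | hxM
  · refine ⟨x - 1, by omega, by omega, ?_⟩
    have hl := link_pred (a := t 1) (b := t 2) hpos1 hpos2 hcop hne hx (by omega)
    exact LinkN_to_LinkS Hrec hl
  · -- x ≥ t 3 : a direct edge down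
    have hgrow : ∀ k, t 3 + k ≤ t (k + 3) := by
      intro k
      induction k with
      | zero => simp
      | succ k ih =>
        have h2 := hstep (k + 3) (by omega)
        have he : k + 1 + 3 = (k + 3) + 1 := by omega
        rw [he]
        omega
    have hex : ∃ n, 3 ≤ n ∧ x < t n := by
      refine ⟨x + 3, by omega, ?_⟩
      have := hgrow x
      omega
    set m := Nat.find hex with hmdef
    obtain ⟨hm3, hmx⟩ := Nat.find_spec hex
    rw [← hmdef] at hm3 hmx
    have hmin : ∀ n, 3 ≤ n → x < t n → m ≤ n := fun n h1 h2 =>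
      Nat.find_le ⟨h1, h2⟩
    have hm4 : 4 ≤ m := by
      rcases Nat.lt_or_ge m 4 with h | h
      · exfalso
        have : m = 3 := by omega
        rw [this] at hmx
        omega
      · exact h
    have hprev : t (m - 1) ≤ x := by
      by_contra hc
      have := hmin (m - 1) (by omega) (by omega)
      omega
    have hrec2 : t m = t (m - 1) + t (m - 2) := trec (m - 2) (by omega) m (m - 1)
      (by omega) (by omega)
    have hm2lt : t (m - 2) < t (m - 1) := by
      have := hstep (m - 2) (by omega)
      have he : m - 2 + 1 = m - 1 := by omega
      rw [he] at this
      exact this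
    have hlt : t m < 2 * x := by omega
    refine ⟨t m - x, by omega, by omega, ?_⟩
    exact LinkS.of_edge ⟨by omega, by omega, by omega, m, by omega, by omega⟩

/-- everything is linked to 1 -/
lemma linked_one (Hpos : ∀ n, 1 ≤ n → 1 ≤ t n)
    (Hrec : ∀ n, 1 ≤ n → t (n + 2) = t (n + 1) + t n)
    (hcop : Nat.Coprime (t 1) (t 2)) (hne : t 1 ≠ t 2) :
    ∀ x, 1 ≤ x → LinkS t x 1 := by
  intro x
  induction x using Nat.strong_induction_on with
  | _ x IH =>
    intro hx
    rcases Nat.lt_or_ge x 2 with h | h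
    · have : x = 1 := by omega
      rw [this]
      exact LinkS.refl t 1
    · obtain ⟨y, hy1, hy2, hy3⟩ := descent Hpos Hrec hcop hne x h
      exact hy3.trans (IH y hy2 hy1)

end Descent

/-! ### Final assembly -/

set_option maxHeartbeats 2000000 in
theorem main (s : ℕ → ℕ+) (hcop : Nat.Coprime (s 1) (s 2))
    (hrec : ∀ n, 1 ≤ n → s (n + 2) = s (n + 1) + s n) :
    ((s 1 < s 2 ∨ Even ((s 1 : ℕ)) ∨ Even ((s 2 : ℕ))) →
       (∃ A, Avoids A {m : ℕ+ | ∃ n, 1 ≤ n ∧ m = s n} ∧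
         ∀ A', Avoids A' {m : ℕ+ | ∃ n, 1 ≤ n ∧ m = s n} → A' = A ∨ A' = Aᶜ)) ∧
    ((s 2 < s 1 ∧ Odd ((s 1 : ℕ)) ∧ Odd ((s 2 : ℕ))) →
       ¬∃ A, Avoids A {m : ℕ+ | ∃ n, 1 ≤ n ∧ m = s n}) := by
  set S : Set ℕ+ := {m : ℕ+ | ∃ n, 1 ≤ n ∧ m = s n} with hSdef
  set t : ℕ → ℕ := fun n => (s n : ℕ) with ht
  have Hpos : ∀ n, 1 ≤ n → 1 ≤ t n := fun n _ => (s n).2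
  have Hrec : ∀ n, 1 ≤ n → t (n + 2) = t (n + 1) + t n := by
    intro n hn
    show ((s (n+2) : ℕ)) = (s (n+1) : ℕ) + (s n : ℕ)
    rw [hrec n hn, PNat.add_coe]
  have Ht3 : t 3 = t 2 + t 1 := by
    have := Hrec 1 (by omega)
    convert this using 2
  have Ht4 : t 4 = t 3 + t 2 := by
    have := Hrec 2 (by omega)
    convert this using 2
  have hcop' : Nat.Coprime (t 1) (t 2) := hcop
  constructor
  · -- uniquely avoidable case
    intro hyp
    have hhyp : t 1 < t 2 ∨ 2 ∣ t 1 ∨ 2 ∣ t 2 := by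
      rcases hyp with h | h | h
      · left; exact_mod_cast h
      · right; left; exact h.two_dvd
      · right; right; exact h.two_dvd
    have hne : t 1 ≠ t 2 := by
      intro he
      have h1 : t 1 = 1 := by
        have hg := hcop'
        unfold Nat.Coprime at hg
        rw [← he, Nat.gcd_self] at hg
        exact hg
      have h2 : t 2 = 1 := by omega
      rcases hhyp with h | h | h <;> omega
    obtain ⟨c₀, hGood⟩ := exists_good (Hpos 1 (by omega)) (Hpos 2 (by omega)) hcop' hhyp
    have hPROP := cg_good (t := t) (c₀ := c₀) Hpos Hrec hGood
    refine ⟨{z : ℕ+ | cg t c₀ (z : ℕ) = true}, ⟨?_, ?_⟩, ?_⟩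
    · intro x hx y hy hxy hmem
      obtain ⟨n, hn1, hn2⟩ := hmem
      have hsum : (x : ℕ) + (y : ℕ) = t n := by
        show ((x : ℕ) + (y : ℕ)) = ((s n : ℕ))
        rw [← hn2, PNat.add_coe]
      have hxyne : (x : ℕ) ≠ (y : ℕ) := fun hc => hxy (PNat.coe_inj.mp hc)
      have hx' : cg t c₀ (x : ℕ) = true := hx
      have hy' : cg t c₀ (y : ℕ) = true := hy
      rcases lt_or_gt_of_ne hxyne with hlt | hgt
      · exact hPROP n hn1 x y x.2 hlt hsum (by rw [hx', hy'])
      · exact hPROP n hn1 y x y.2 hgt (by omega) (by rw [hx', hy'])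
    · intro x hx y hy hxy hmem
      obtain ⟨n, hn1, hn2⟩ := hmem
      have hsum : (x : ℕ) + (y : ℕ) = t n := by
        show ((x : ℕ) + (y : ℕ)) = ((s n : ℕ))
        rw [← hn2, PNat.add_coe]
      have hxyne : (x : ℕ) ≠ (y : ℕ) := fun hc => hxy (PNat.coe_inj.mp hc)
      have hx' : cg t c₀ (x : ℕ) = false := by
        have : ¬ (cg t c₀ (x : ℕ) = true) := hx
        simpa using this
      have hy' : cg t c₀ (y : ℕ) = false := by
        have : ¬ (cg t c₀ (y : ℕ) = true) := hy
        simpa using this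
      rcases lt_or_gt_of_ne hxyne with hlt | hgt
      · exact hPROP n hn1 x y x.2 hlt hsum (by rw [hx', hy'])
      · exact hPROP n hn1 y x y.2 hgt (by omega) (by rw [hx', hy'])
    · -- uniqueness
      intro A' hA'
      classical
      set P : ℕ → Prop := fun n => ∃ h : 0 < n, (⟨n, h⟩ : ℕ+) ∈ A' with hPdef
      set Q : ℕ → Prop := fun n => cg t c₀ n = true with hQdef
      have haltP : ∀ u v, EdgeS t u v → (P u ↔ ¬ P v) := by
        rintro u v ⟨hne', hu, hv, m, hm1, hsum⟩
        have hu0 : 0 < u := hu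
        have hv0 : 0 < v := hv
        have hsum' : (⟨u, hu0⟩ : ℕ+) + ⟨v, hv0⟩ = s m := by
          apply PNat.coe_inj.mp
          show u + v = ((s m : ℕ+) : ℕ)
          exact hsum
        have hmem : (⟨u, hu0⟩ : ℕ+) + ⟨v, hv0⟩ ∈ S := ⟨m, hm1, hsum'⟩
        have hne'' : (⟨u, hu0⟩ : ℕ+) ≠ ⟨v, hv0⟩ := by
          intro hc
          exact hne' (congrArg (fun z : ℕ+ => (z : ℕ)) hc)
        have hPu : P u ↔ (⟨u, hu0⟩ : ℕ+) ∈ A' := by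
          constructor
          · rintro ⟨h, hh⟩; exact hh
          · intro h; exact ⟨hu0, h⟩
        have hPv : P v ↔ (⟨v, hv0⟩ : ℕ+) ∈ A' := by
          constructor
          · rintro ⟨h, hh⟩; exact hh
          · intro h; exact ⟨hv0, h⟩
        have h1 := hA'.1 ⟨u, hu0⟩
        have h2 := hA'.2 ⟨u, hu0⟩
        constructor
        · intro hPu' hPv'
          exact h1 (hPu.mp hPu') _ (hPv.mp hPv') hne'' hmem
        · intro hnPv
          by_contra hnPu
          refine h2 ?_ _ ?_ hne'' hmem
          · exact fun hc => hnPu (hPu.mpr hc)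
          · exact fun hc => hnPv (hPv.mpr hc)
      have haltQ : ∀ u v, EdgeS t u v → (Q u ↔ ¬ Q v) := by
        rintro u v ⟨hne', hu, hv, m, hm1, hsum⟩
        rcases lt_or_gt_of_ne hne' with h | h
        · have hne3 := hPROP m hm1 u v hu h hsum
          show (cg t c₀ u = true) ↔ ¬ (cg t c₀ v = true)
          cases hcu : cg t c₀ u <;> cases hcv : cg t c₀ v <;> simp_all
        · have hne3 := hPROP m hm1 v u hv h (by omega)
          show (cg t c₀ u = true) ↔ ¬ (cg t c₀ v = true)
          cases hcu : cg t c₀ u <;> cases hcv : cg t c₀ v <;> simp_all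
      have key : ∀ z : ℕ+, ((P z ↔ P 1) ↔ (Q z ↔ Q 1)) := by
        intro z
        exact linked_one Hpos Hrec hcop' hne (z : ℕ) z.2 P Q haltP haltQ
      have hP1 : P 1 ↔ (1 : ℕ+) ∈ A' := by
        constructor
        · rintro ⟨h, hh⟩; exact hh
        · intro h; exact ⟨by omega, h⟩
      have hPz : ∀ z : ℕ+, (P (z : ℕ) ↔ z ∈ A') := by
        intro z
        constructor
        · rintro ⟨h, hh⟩; exact hh
        · intro h; exact ⟨z.2, h⟩
      have hmemA : ∀ w : ℕ+, (w ∈ {z : ℕ+ | cg t c₀ (z : ℕ) = true}) ↔ Q (w : ℕ) :=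
        fun w => Iff.rfl
      clear_value P Q
      by_cases h1 : ((1 : ℕ+) ∈ A') ↔ Q 1
      · left
        ext z
        rw [hmemA z]
        have hz := key z
        have h2 := hPz z
        tauto
      · right
        ext z
        rw [Set.mem_compl_iff, hmemA z]
        have hz := key z
        have h2 := hPz z
        tauto
  · -- non-avoidable case
    rintro ⟨hlt, ⟨i, hi⟩, ⟨j, hj⟩⟩ ⟨A, hA⟩
    have hltn : ((s 2 : ℕ)) < ((s 1 : ℕ)) := by exact_mod_cast hlt
    have Hc3 : ((s 3 : ℕ)) = ((s 2 : ℕ)) + ((s 1 : ℕ)) := Ht3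
    have Hc4 : ((s 4 : ℕ)) = ((s 3 : ℕ)) + ((s 2 : ℕ)) := Ht4
    have hedge : ∀ u v : ℕ+, u ≠ v → (u + v) ∈ S → ((u ∈ A) ↔ ¬ (v ∈ A)) := by
      intro u v huv hmem
      constructor
      · intro hu hv
        exact hA.1 u hu v hv huv hmem
      · intro hnv
        by_contra hnu
        exact hA.2 u hnu v hnv huv hmem
    have hij : j < i := by omega
    have hx0 : 0 < i + j + 1 := by omega
    have hy0 : 0 < i - j := by omega
    have hz0 : 0 < i + 3*j + 2 := by omega
    set X : ℕ+ := ⟨i + j + 1, hx0⟩ with hXdef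
    set Y : ℕ+ := ⟨i - j, hy0⟩ with hYdef
    set Z : ℕ+ := ⟨i + 3*j + 2, hz0⟩ with hZdef
    have hXc : (X : ℕ) = i + j + 1 := rfl
    have hYc : (Y : ℕ) = i - j := rfl
    have hZc : (Z : ℕ) = i + 3*j + 2 := rfl
    have hXY : X + Y = s 1 := by
      apply PNat.coe_inj.mp
      rw [PNat.add_coe, hXc, hYc]
      omega
    have hYZ : Y + Z = s 3 := by
      apply PNat.coe_inj.mp
      rw [PNat.add_coe, hYc, hZc]
      omega
    have hXZ : X + Z = s 4 := by
      apply PNat.coe_inj.mp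
      rw [PNat.add_coe, hXc, hZc]
      omega
    have hXYne : X ≠ Y := by
      intro hc
      have h := PNat.coe_inj.mpr hc
      rw [hXc, hYc] at h
      omega
    have hYZne : Y ≠ Z := by
      intro hc
      have h := PNat.coe_inj.mpr hc
      rw [hYc, hZc] at h
      omega
    have hXZne : X ≠ Z := by
      intro hc
      have h := PNat.coe_inj.mpr hc
      rw [hXc, hZc] at h
      omega
    have e1 := hedge X Y hXYne ⟨1, by omega, hXY⟩
    have e2 := hedge Y Z hYZne ⟨3, by omega, hYZ⟩
    have e3 := hedge X Z hXZne ⟨4, by omega, hXZ⟩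
    tauto

end Stmt19

/-- For a generalized Fibonacci sequence with coprime `s 1, s 2` and
`s (n+1) = s n + s (n-1)`, the set `{s n : n ≥ 1}` is uniquely avoidable if
`s 1 < s 2` or one of `s 1, s 2` is even, and not avoidable if `s 2 < s 1`
and both are odd. -/
theorem stmt19 (s : ℕ → ℕ+) (hcop : Nat.Coprime (s 1) (s 2))
    (hrec : ∀ n, 1 ≤ n → s (n + 2) = s (n + 1) + s n) :
    ((s 1 < s 2 ∨ Even ((s 1 : ℕ)) ∨ Even ((s 2 : ℕ))) →
       UniquelyAvoidable {m : ℕ+ | ∃ n, 1 ≤ n ∧ m = s n}) ∧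
    ((s 2 < s 1 ∧ Odd ((s 1 : ℕ)) ∧ Odd ((s 2 : ℕ))) →
       ¬Avoidable {m : ℕ+ | ∃ n, 1 ≤ n ∧ m = s n}) := by
  constructor
  · intro h
    exact (Stmt19.main s hcop hrec).1 h
  · intro h hav
    exact (Stmt19.main s hcop hrec).2 h hav
end
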